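/- arXiv:2205.10606 — 11 statements merged into one kernel-verified Lean document; each statement's English description precedes it below -/
import Mathlib

section
/- Let m ≥ 1, let p and q be complex polynomials of degree at most m−1 having no common complex root, and let θ_1, …, θ_{2m−1} be distinct real numbers such that q(θ_j) ≠ 0 and p(θ_j)/q(θ_j) = e^{iθ_j} for j = 1, …, 2m−1. Then q(x) ≠ 0 for every real x, and |p(x)/q(x)| = 1 for every real x. -/
/-- An irreducible (m-1,m-1)-rational function interpolating the
imaginary exponential at 2m-1 distinct real nodes has no real poles and is
unitary on the real axis. -/
theorem stmt_0 (m : ℕ) (hm : 1 ≤ m) (p q : Polynomial ℂ)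
    (hp : p.degree ≤ (m - 1 : ℕ)) (hq : q.degree ≤ (m - 1 : ℕ))
    (hirr : ∀ z : ℂ, ¬(p.eval z = 0 ∧ q.eval z = 0))
    (θ : Fin (2 * m - 1) → ℝ) (hθ : Function.Injective θ)
    (hqθ : ∀ j, q.eval ((θ j : ℝ) : ℂ) ≠ 0)
    (hint : ∀ j, p.eval ((θ j : ℝ) : ℂ) / q.eval ((θ j : ℝ) : ℂ)
      = Complex.exp (Complex.I * (θ j : ℝ))) :
    (∀ x : ℝ, q.eval (x : ℂ) ≠ 0) ∧
    (∀ x : ℝ, ‖p.eval (x : ℂ) / q.eval (x : ℂ)‖ = 1) := by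
  set c := starRingEnd ℂ with hc
  -- evaluation of mapped polynomial at a real point
  have hmapeval : ∀ (r : Polynomial ℂ) (x : ℝ),
      (r.map c).eval (x : ℂ) = c (r.eval (x : ℂ)) := by
    intro r x
    have h := Polynomial.eval₂_at_apply (p := r) c ((x : ℂ))
    rw [Polynomial.eval_map]
    simpa [hc, Complex.conj_ofReal] using h
  set F : Polynomial ℂ := p * p.map c - q * q.map c with hF
  have hnp : p.natDegree ≤ m - 1 := Polynomial.natDegree_le_iff_degree_le.mpr hp
  have hnq : q.natDegree ≤ m - 1 := Polynomial.natDegree_le_iff_degree_le.mpr hq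
  have hFdeg : F.natDegree < 2 * m - 1 := by
    rw [hF]
    have h1 : (p * p.map c).natDegree ≤ (m - 1) + (m - 1) :=
      le_trans (Polynomial.natDegree_mul_le)
        (add_le_add hnp (by simpa [Polynomial.natDegree_map] using hnp))
    have h2 : (q * q.map c).natDegree ≤ (m - 1) + (m - 1) :=
      le_trans (Polynomial.natDegree_mul_le)
        (add_le_add hnq (by simpa [Polynomial.natDegree_map] using hnq))
    have := Polynomial.natDegree_sub_le (p * p.map c) (q * q.map c)
    omega
  have hF0 : F = 0 := by
    apply Polynomial.eq_zero_of_natDegree_lt_card_of_eval_eq_zero F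
      (f := fun j => ((θ j : ℝ) : ℂ))
      (fun a b hab => hθ (Complex.ofReal_injective hab))
    · intro j
      have hq' := hqθ j
      have hpj := hint j
      rw [div_eq_iff hq'] at hpj
      have hcexp : c (Complex.exp (Complex.I * (θ j : ℝ)))
          = Complex.exp (-(Complex.I * (θ j : ℝ))) := by
        rw [← Complex.exp_conj]
        simp [hc, Complex.conj_ofReal]
      have he : Complex.exp (Complex.I * (θ j : ℝ))
          * Complex.exp (-(Complex.I * (θ j : ℝ))) = 1 := by
        rw [← Complex.exp_add]; simp
      simp only [hF, Polynomial.eval_sub, Polynomial.eval_mul, hmapeval, hpj,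
        map_mul, hcexp]
      linear_combination (q.eval ((θ j : ℝ) : ℂ) * c (q.eval ((θ j : ℝ) : ℂ))) * he
    · simpa using hFdeg
  have key : ∀ x : ℝ, Complex.normSq (p.eval (x : ℂ)) = Complex.normSq (q.eval (x : ℂ)) := by
    intro x
    have h := congrArg (Polynomial.eval (x : ℂ)) hF0
    simp only [hF, Polynomial.eval_sub, Polynomial.eval_mul, hmapeval,
      Polynomial.eval_zero, sub_eq_zero] at h
    have : (Complex.normSq (p.eval (x : ℂ)) : ℂ) = (Complex.normSq (q.eval (x : ℂ)) : ℂ) := by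
      rw [← Complex.mul_conj, ← Complex.mul_conj]; exact h
    exact_mod_cast this
  have hqne : ∀ x : ℝ, q.eval (x : ℂ) ≠ 0 := by
    intro x hx
    have hp0 : p.eval (x : ℂ) = 0 := by
      have h := key x
      rw [hx] at h
      simp only [map_zero] at h
      exact Complex.normSq_eq_zero.mp h
    exact hirr (x : ℂ) ⟨hp0, hx⟩
  refine ⟨hqne, fun x => ?_⟩
  rw [norm_div, Complex.norm_def, Complex.norm_def, key x,
    div_self (Real.sqrt_ne_zero'.mpr (Complex.normSq_pos.mpr (hqne x)))]
end

section
/- Let m ≥ 1, let p and q be complex polynomials of degree at most m−1, and let θ_1, …, θ_{2m−1} be distinct real numbers with |p(θ_j)| = |q(θ_j)| for j = 1, …, 2m−1. Then |p(x)| = |q(x)| for every real x. -/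
/-- If two complex polynomials of degree at most m-1 have equal
absolute values at 2m-1 distinct real points, then they have equal absolute
values everywhere on the real axis. -/
theorem stmt_1 (m : ℕ) (hm : 1 ≤ m) (p q : Polynomial ℂ)
    (hp : p.degree ≤ (m - 1 : ℕ)) (hq : q.degree ≤ (m - 1 : ℕ))
    (θ : Fin (2 * m - 1) → ℝ) (hθ : Function.Injective θ)
    (habs : ∀ j, ‖p.eval ((θ j : ℝ) : ℂ)‖ = ‖q.eval ((θ j : ℝ) : ℂ)‖) :
    ∀ x : ℝ, ‖p.eval (x : ℂ)‖ = ‖q.eval (x : ℂ)‖ := by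
  set c := starRingEnd ℂ
  set R : Polynomial ℂ := p * p.map c - q * q.map c with hR
  have hev : ∀ x : ℝ, R.eval (x : ℂ) =
      (‖p.eval (x : ℂ)‖ ^ 2 : ℝ) - (‖q.eval (x : ℂ)‖ ^ 2 : ℝ) := by
    intro x
    have hconj : ((x : ℂ)) = c (x : ℂ) := by simp [c, Complex.conj_ofReal]
    have hmap : ∀ r : Polynomial ℂ, (r.map c).eval (x : ℂ) = c (r.eval (x : ℂ)) := by
      intro r
      rw [Polynomial.eval_map]
      conv_lhs => rw [hconj]
      rw [Polynomial.eval₂_at_apply]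
    simp only [hR, Polynomial.eval_sub, Polynomial.eval_mul, hmap]
    rw [Complex.mul_conj, Complex.mul_conj]
    norm_cast
    rw [Complex.sq_norm, Complex.sq_norm]
  have hR0 : R = 0 := by
    apply Polynomial.eq_zero_of_natDegree_lt_card_of_eval_eq_zero R
      (f := fun j : Fin (2 * m - 1) => ((θ j : ℝ) : ℂ))
      (fun a b hab => hθ (Complex.ofReal_injective hab))
    · intro j
      rw [hev (θ j), habs j]
      ring
    · have h2 : ∀ r : Polynomial ℂ, r.degree ≤ (m - 1 : ℕ) →
          (r * r.map c).degree ≤ (((m - 1) + (m - 1) : ℕ) : WithBot ℕ) := by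
        intro r hr
        refine le_trans (Polynomial.degree_mul_le _ _) ?_
        rw [Nat.cast_add]
        exact add_le_add hr (le_trans Polynomial.degree_map_le hr)
      have hdeg : R.degree ≤ ((m - 1 : ℕ) + (m - 1 : ℕ) : ℕ) :=
        le_trans (Polynomial.degree_sub_le _ _) (max_le (h2 p hp) (h2 q hq))
      have := Polynomial.natDegree_le_iff_degree_le.mpr hdeg
      simp only [Fintype.card_fin]
      omega
  intro x
  have h := hev x
  rw [hR0] at h
  simp only [Polynomial.eval_zero] at h
  have key : (‖p.eval (x : ℂ)‖ ^ 2 : ℝ) = (‖q.eval (x : ℂ)‖ ^ 2 : ℝ) := by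
    have := sub_eq_zero.mp (by exact_mod_cast h.symm)
    exact_mod_cast this
  have h1 := norm_nonneg (p.eval (x : ℂ))
  have h2 := norm_nonneg (q.eval (x : ℂ))
  nlinarith [key]
end

section
/- Let y_1, …, y_m be distinct real support nodes and x_1, …, x_{m−1} be real test nodes such that all 2m−1 nodes are pairwise distinct. Let L ∈ ℂ^{(m−1)×m} be the Loewner matrix with entries L_{kj} = (e^{i x_k} − e^{i y_j})/(x_k − y_j), and let w = (w_1, …, w_m) ∈ ℂ^m satisfy L w = 0 and w_j ≠ 0 for all j. Define the polynomials p(x) = Σ_{j=1}^m e^{i y_j} w_j ∏_{k≠j}(x − y_k) and q(x) = Σ_{j=1}^m w_j ∏_{k≠j}(x − y_k), and assume p and q have no common complex root. Then q(x) ≠ 0 for every real x, |p(x)/q(x)| = 1 for every real x, and the rational function p/q interpolates the imaginary exponential at all 2m−1 nodes: p(y_j)/q(y_j) = e^{i y_j} for j = 1, …, m and p(x_k)/q(x_k) = e^{i x_k} for k = 1, …, m−1. -/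
open Polynomial Finset


/-- A barycentric rational interpolant whose coefficient vector lies
in the nullspace of the Loewner matrix (with all coefficients nonzero, and
irreducible) has no real poles, is unitary on the real axis, and interpolates
the imaginary exponential at all 2m-1 nodes. -/
theorem stmt_2 (m : ℕ) (hm : 1 ≤ m)
    (y : Fin m → ℝ) (hy : Function.Injective y)
    (x : Fin (m - 1) → ℝ) (hx : Function.Injective x)
    (hxy : ∀ k j, x k ≠ y j)
    (L : Matrix (Fin (m - 1)) (Fin m) ℂ)
    (hL : ∀ k j, L k j = (Complex.exp (Complex.I * (x k : ℝ)) - Complex.exp (Complex.I * (y j : ℝ)))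
        / (((x k : ℝ) : ℂ) - ((y j : ℝ) : ℂ)))
    (w : Fin m → ℂ) (hw : L.mulVec w = 0) (hwj : ∀ j, w j ≠ 0)
    (p q : ℂ → ℂ)
    (hp : ∀ z, p z = ∑ j, Complex.exp (Complex.I * (y j : ℝ)) * w j
        * ∏ k ∈ Finset.univ.erase j, (z - ((y k : ℝ) : ℂ)))
    (hq : ∀ z, q z = ∑ j, w j * ∏ k ∈ Finset.univ.erase j, (z - ((y k : ℝ) : ℂ)))
    (hirr : ∀ z : ℂ, ¬(p z = 0 ∧ q z = 0)) :
    (∀ t : ℝ, q (t : ℂ) ≠ 0) ∧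
    (∀ t : ℝ, ‖p (t : ℂ) / q (t : ℂ)‖ = 1) ∧
    (∀ j, p ((y j : ℝ) : ℂ) / q ((y j : ℝ) : ℂ) = Complex.exp (Complex.I * (y j : ℝ))) ∧
    (∀ k, p ((x k : ℝ) : ℂ) / q ((x k : ℝ) : ℂ) = Complex.exp (Complex.I * (x k : ℝ))) := by
  classical
  -- unitary exponential fact
  have hexp1 : ∀ t : ℝ, Complex.exp (Complex.I * t) *
      (starRingEnd ℂ) (Complex.exp (Complex.I * t)) = 1 := by
    intro t
    have h : (Complex.I * t) + (starRingEnd ℂ) (Complex.I * t) = 0 := by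
      simp [map_mul, Complex.conj_I, Complex.conj_ofReal]
    rw [← Complex.exp_conj, ← Complex.exp_add, h, Complex.exp_zero]
  -- basic polynomials
  set B : Fin m → ℂ[X] := fun j => ∏ k ∈ Finset.univ.erase j, (X - C ((y k : ℝ) : ℂ)) with hB
  set a : Fin m → ℂ := fun j => Complex.exp (Complex.I * (y j : ℝ)) * w j with ha
  set P : ℂ[X] := ∑ j, C (a j) * B j with hP
  set Q : ℂ[X] := ∑ j, C (w j) * B j with hQ
  set P' : ℂ[X] := ∑ j, C ((starRingEnd ℂ) (a j)) * B j with hP'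
  set Q' : ℂ[X] := ∑ j, C ((starRingEnd ℂ) (w j)) * B j with hQ'
  set F : ℂ[X] := P * P' - Q * Q' with hF
  have hBeval : ∀ (z : ℂ) j, (B j).eval z = ∏ k ∈ Finset.univ.erase j, (z - ((y k : ℝ) : ℂ)) := by
    intro z j; simp [hB, eval_prod]
  have hBdeg : ∀ j, (B j).natDegree ≤ m - 1 := by
    intro j
    calc (B j).natDegree ≤ ∑ k ∈ Finset.univ.erase j, (X - C ((y k : ℝ) : ℂ)).natDegree :=
          natDegree_prod_le _ _
      _ = ∑ k ∈ Finset.univ.erase j, 1 := by simp [natDegree_X_sub_C]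
      _ = m - 1 := by simp
  have hdeg : ∀ (c : Fin m → ℂ), (∑ j, C (c j) * B j).natDegree ≤ m - 1 := by
    intro c
    refine natDegree_sum_le_of_forall_le _ _ fun j _ => ?_
    exact le_trans natDegree_mul_le (by simpa [natDegree_C] using hBdeg j)
  have hPeval : ∀ z, P.eval z = p z := by
    intro z; simp [hP, eval_finset_sum, hBeval, ha, hp z]
  have hQeval : ∀ z, Q.eval z = q z := by
    intro z; simp [hQ, eval_finset_sum, hBeval, hq z]
  have hconj : ∀ (c : Fin m → ℂ) (t : ℝ),
      (∑ j, C ((starRingEnd ℂ) (c j)) * B j).eval (t : ℂ)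
        = (starRingEnd ℂ) ((∑ j, C (c j) * B j).eval (t : ℂ)) := by
    intro c t
    simp [eval_finset_sum, hBeval, map_sum, map_mul, map_prod, map_sub, Complex.conj_ofReal]
  have hP'eval : ∀ t : ℝ, P'.eval (t : ℂ) = (starRingEnd ℂ) (p (t : ℂ)) := by
    intro t; rw [hP', hconj a t, ← hP, hPeval]
  have hQ'eval : ∀ t : ℝ, Q'.eval (t : ℂ) = (starRingEnd ℂ) (q (t : ℂ)) := by
    intro t; rw [hQ', hconj w t, ← hQ, hQeval]
  -- interpolation identities (without dividing)
  have hpyj : ∀ j, p ((y j : ℝ) : ℂ) = Complex.exp (Complex.I * (y j : ℝ)) * q ((y j : ℝ) : ℂ) := by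
    intro j
    have hyz : ∀ b, b ≠ j → (∏ k ∈ Finset.univ.erase b, (((y j : ℝ) : ℂ) - ((y k : ℝ) : ℂ))) = 0 := by
      intro b hbj
      refine Finset.prod_eq_zero (Finset.mem_erase.mpr ⟨Ne.symm hbj, Finset.mem_univ j⟩) ?_
      simp
    have hps : p ((y j : ℝ) : ℂ) = Complex.exp (Complex.I * (y j : ℝ)) * w j
        * ∏ k ∈ Finset.univ.erase j, (((y j : ℝ) : ℂ) - ((y k : ℝ) : ℂ)) := by
      rw [hp]
      refine Finset.sum_eq_single j (fun b _ hbj => ?_) (by simp)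
      rw [hyz b hbj, mul_zero]
    have hqs : q ((y j : ℝ) : ℂ) = w j
        * ∏ k ∈ Finset.univ.erase j, (((y j : ℝ) : ℂ) - ((y k : ℝ) : ℂ)) := by
      rw [hq]
      refine Finset.sum_eq_single j (fun b _ hbj => ?_) (by simp)
      rw [hyz b hbj, mul_zero]
    rw [hps, hqs]; ring
  have hsub : ∀ (k : Fin (m-1)) (j : Fin m), ((x k : ℝ) : ℂ) - ((y j : ℝ) : ℂ) ≠ 0 := by
    intro k j
    exact sub_ne_zero.mpr (by exact_mod_cast hxy k j)
  have hkeyx : ∀ k, p ((x k : ℝ) : ℂ) = Complex.exp (Complex.I * (x k : ℝ)) * q ((x k : ℝ) : ℂ) := by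
    intro k
    have h0 : ∑ j, L k j * w j = 0 := by
      have := congrFun hw k
      simpa [Matrix.mulVec, dotProduct] using this
    rw [hp, hq, Finset.mul_sum, ← sub_eq_zero, ← Finset.sum_sub_distrib]
    have hterm : ∀ j ∈ Finset.univ,
        (Complex.exp (Complex.I * (y j : ℝ)) * w j
            * ∏ k' ∈ Finset.univ.erase j, (((x k : ℝ) : ℂ) - ((y k' : ℝ) : ℂ))
          - Complex.exp (Complex.I * (x k : ℝ)) * (w j
            * ∏ k' ∈ Finset.univ.erase j, (((x k : ℝ) : ℂ) - ((y k' : ℝ) : ℂ))))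
        = (-(∏ j', (((x k : ℝ) : ℂ) - ((y j' : ℝ) : ℂ)))) * (L k j * w j) := by
      intro j _
      rw [hL, ← Finset.mul_prod_erase Finset.univ
        (fun j' => (((x k : ℝ) : ℂ) - ((y j' : ℝ) : ℂ))) (Finset.mem_univ j)]
      field_simp [hsub k j]
      ring
    rw [Finset.sum_congr rfl hterm, ← Finset.mul_sum, h0, mul_zero]
  -- F vanishes at any real point where p = exp * q
  have hFzero : ∀ t : ℝ, p (t : ℂ) = Complex.exp (Complex.I * t) * q (t : ℂ) → F.eval (t : ℂ) = 0 := by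
    intro t ht
    have : F.eval (t : ℂ) = p (t : ℂ) * (starRingEnd ℂ) (p (t : ℂ))
        - q (t : ℂ) * (starRingEnd ℂ) (q (t : ℂ)) := by
      simp [hF, eval_sub, eval_mul, hPeval, hQeval, hP'eval t, hQ'eval t]
    rw [this, ht, map_mul]
    linear_combination (q (t : ℂ) * (starRingEnd ℂ) (q (t : ℂ))) * hexp1 t
  -- F is zero
  have hFeq : F = 0 := by
    set v : Fin m ⊕ Fin (m - 1) → ℂ :=
      Sum.elim (fun j => ((y j : ℝ) : ℂ)) (fun k => ((x k : ℝ) : ℂ)) with hv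
    have hvinj : Function.Injective v := by
      rintro (j1 | k1) (j2 | k2) h <;> simp [hv] at h
      · exact congrArg Sum.inl (hy (by exact_mod_cast h))
      · exact absurd (by exact_mod_cast h.symm : x k2 = y j1) (hxy k2 j1)
      · exact absurd (by exact_mod_cast h : x k1 = y j2) (hxy k1 j2)
      · exact congrArg Sum.inr (hx (by exact_mod_cast h))
    have heval : ∀ i, F.eval (v i) = 0 := by
      rintro (j | k)
      · exact hFzero (y j) (hpyj j)
      · exact hFzero (x k) (hkeyx k)
    refine F.eq_zero_of_natDegree_lt_card_of_eval_eq_zero hvinj heval ?_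
    have h1 : (P * P').natDegree ≤ (m - 1) + (m - 1) := by
      refine le_trans natDegree_mul_le ?_
      exact add_le_add (hdeg a) (hdeg fun j => (starRingEnd ℂ) (a j))
    have h2 : (Q * Q').natDegree ≤ (m - 1) + (m - 1) := by
      refine le_trans natDegree_mul_le ?_
      exact add_le_add (hdeg w) (hdeg fun j => (starRingEnd ℂ) (w j))
    have h3 : F.natDegree ≤ (m - 1) + (m - 1) := le_trans (natDegree_sub_le _ _) (max_le h1 h2)
    have hcard : Fintype.card (Fin m ⊕ Fin (m - 1)) = m + (m - 1) := by simp
    rw [hcard]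
    omega
  -- modulus equality on the real line
  have hmod : ∀ t : ℝ, Complex.normSq (p (t : ℂ)) = Complex.normSq (q (t : ℂ)) := by
    intro t
    have h0 : F.eval (t : ℂ) = 0 := by rw [hFeq]; simp
    have h1 : p (t : ℂ) * (starRingEnd ℂ) (p (t : ℂ))
        = q (t : ℂ) * (starRingEnd ℂ) (q (t : ℂ)) := by
      have : F.eval (t : ℂ) = p (t : ℂ) * (starRingEnd ℂ) (p (t : ℂ))
          - q (t : ℂ) * (starRingEnd ℂ) (q (t : ℂ)) := by
        simp [hF, eval_sub, eval_mul, hPeval, hQeval, hP'eval t, hQ'eval t]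
      rw [this] at h0
      exact sub_eq_zero.mp h0
    have := h1
    rw [Complex.mul_conj, Complex.mul_conj] at this
    exact_mod_cast this
  have hqne : ∀ t : ℝ, q (t : ℂ) ≠ 0 := by
    intro t hq0
    have hp0 : p (t : ℂ) = 0 := by
      have : Complex.normSq (p (t : ℂ)) = 0 := by rw [hmod t, hq0]; simp
      exact Complex.normSq_eq_zero.mp this
    exact hirr (t : ℂ) ⟨hp0, hq0⟩
  refine ⟨hqne, ?_, ?_, ?_⟩
  · intro t
    have habs : ‖p (t : ℂ)‖ = ‖q (t : ℂ)‖ := by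
      rw [Complex.norm_def, Complex.norm_def, hmod t]
    rw [norm_div, habs, div_self]
    exact norm_ne_zero_iff.mpr (hqne t)
  · intro j
    rw [hpyj j, mul_div_assoc, div_self (hqne (y j)), mul_one]
  · intro k
    rw [hkeyx k, mul_div_assoc, div_self (hqne (x k)), mul_one]
end

section
/- Let y_1, …, y_m be distinct real support nodes and x_1, …, x_n distinct real test nodes disjoint from the support nodes, with n ≥ m−1, and let L ∈ ℂ^{n×m} be the Loewner matrix with entries L_{kj} = (e^{i x_k} − e^{i y_j})/(x_k − y_j). Assume the smallest singular value of L is non-degenerate, i.e., the eigenspace of the Hermitian matrix LᴴL corresponding to its smallest eigenvalue is one-dimensional. Let w ∈ ℂ^m be a unit vector minimizing ‖Lu‖_2 over all unit vectors u ∈ ℂ^m. Define p(x) = Σ_{j=1}^m e^{i y_j} w_j ∏_{k≠j}(x − y_k) and q(x) = Σ_{j=1}^m w_j ∏_{k≠j}(x − y_k), and assume p and q have no common complex root. Then q(x) ≠ 0 for every real x and |p(x)/q(x)| = 1 for every real x. -/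
open Matrix

section Aux

lemma dot_self_eq {n : ℕ} (z : Fin n → ℂ) :
    star z ⬝ᵥ z = ((∑ k, ‖z k‖ ^ 2 : ℝ) : ℂ) := by
  push_cast
  simp only [dotProduct, Pi.star_apply]
  refine Finset.sum_congr rfl fun k _ => ?_
  rw [RCLike.star_def, ← Complex.normSq_eq_conj_mul_self, ← Complex.sq_norm]
  norm_cast

lemma dot_star_comm {n : ℕ} (a b : Fin n → ℂ) :
    star a ⬝ᵥ b = (starRingEnd ℂ) (star b ⬝ᵥ a) := by
  simp only [dotProduct, Pi.star_apply, map_sum, _root_.map_mul, RCLike.star_def,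
    Complex.conj_conj]
  exact Finset.sum_congr rfl fun i _ => by ring

lemma abs_smul_sq {κ : ℕ} (s : ℝ) (v : Fin κ → ℂ) (j : Fin κ) :
    ‖((s : ℂ) • v) j‖ ^ 2 = s ^ 2 * ‖v j‖ ^ 2 := by
  rw [Pi.smul_apply, smul_eq_mul, norm_mul, Complex.norm_real, Real.norm_eq_abs, mul_pow, sq_abs]

lemma adj_key {m n : ℕ} (M : Matrix (Fin n) (Fin m) ℂ) (a b : Fin m → ℂ) :
    star a ⬝ᵥ ((Mᴴ * M) *ᵥ b) = star (M *ᵥ a) ⬝ᵥ (M *ᵥ b) := by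
  rw [star_mulVec, dotProduct_mulVec, dotProduct_mulVec, vecMul_vecMul]

lemma min_eigen {m n : ℕ} (M : Matrix (Fin n) (Fin m) ℂ) (μ₀ : ℝ)
    (hlb : ∀ u : Fin m → ℂ,
      μ₀ * (∑ j, ‖u j‖ ^ 2) ≤ ∑ k, ‖(M *ᵥ u) k‖ ^ 2)
    (u : Fin m → ℂ)
    (hu : ∑ k, ‖(M *ᵥ u) k‖ ^ 2 = μ₀ * ∑ j, ‖u j‖ ^ 2) :
    (Mᴴ * M) *ᵥ u = (μ₀ : ℂ) • u := by
  set g : (Fin m → ℂ) → (Fin m → ℂ) → ℂ :=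
    fun a b => star (M *ᵥ a) ⬝ᵥ (M *ᵥ b) - (μ₀ : ℂ) * (star a ⬝ᵥ b) with hgdef
  have hg_self : ∀ a, g a a =
      ((∑ k, ‖(M *ᵥ a) k‖ ^ 2 - μ₀ * ∑ j, ‖a j‖ ^ 2 : ℝ) : ℂ) := by
    intro a
    simp only [hgdef, dot_self_eq]
    push_cast
    ring
  have hg_nonneg : ∀ a,
      0 ≤ ∑ k, ‖(M *ᵥ a) k‖ ^ 2 - μ₀ * ∑ j, ‖a j‖ ^ 2 := by
    intro a; linarith [hlb a]
  have hsym : ∀ a b, g b a = (starRingEnd ℂ) (g a b) := by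
    intro a b
    simp only [hgdef]
    rw [dot_star_comm (M *ᵥ b) (M *ᵥ a), dot_star_comm b a]
    simp [map_sub, _root_.map_mul, Complex.conj_ofReal]
  have hadd1 : ∀ a b c, g (a + b) c = g a c + g b c := by
    intro a b c
    simp only [hgdef, Matrix.mulVec_add, star_add, add_dotProduct, dotProduct_add]
    ring
  have hadd2 : ∀ a b c, g a (b + c) = g a b + g a c := by
    intro a b c
    simp only [hgdef, Matrix.mulVec_add, dotProduct_add]
    ring
  have hsmul1 : ∀ (s : ℂ) a b, g (s • a) b = (starRingEnd ℂ) s * g a b := by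
    intro s a b
    simp only [hgdef, Matrix.mulVec_smul, star_smul, smul_dotProduct, smul_eq_mul,
      RCLike.star_def]
    ring
  have hsmul2 : ∀ (s : ℂ) a b, g a (s • b) = s * g a b := by
    intro s a b
    simp only [hgdef, Matrix.mulVec_smul, dotProduct_smul, smul_eq_mul]
    ring
  have hgu : g u u = 0 := by rw [hg_self, hu]; simp
  have hzero : ∀ a, g a u = 0 := by
    intro a
    set z := g a u with hz
    set r := ∑ k, ‖(M *ᵥ a) k‖ ^ 2 - μ₀ * ∑ j, ‖a j‖ ^ 2 with hr
    have hrnn : 0 ≤ r := hg_nonneg a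
    have hgaa : g a a = (r : ℂ) := hg_self a
    by_contra hzne
    have hnsq : 0 < Complex.normSq z := by
      rcases lt_or_eq_of_le (Complex.normSq_nonneg z) with h | h
      · exact h
      · exact absurd (Complex.normSq_eq_zero.mp h.symm) hzne
    have hzz : z * (starRingEnd ℂ) z = (Complex.normSq z : ℂ) := Complex.mul_conj z
    have hzz' : (starRingEnd ℂ) z * z = (Complex.normSq z : ℂ) := by
      rw [mul_comm]; exact hzz
    have expand : ∀ t : ℝ, g (u + ((t : ℂ) * z) • a) (u + ((t : ℂ) * z) • a)
        = ((2 * t * Complex.normSq z + t ^ 2 * Complex.normSq z * r : ℝ) : ℂ) := by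
      intro t
      have hgua : g u a = (starRingEnd ℂ) z := by rw [hsym a u, hz]
      simp only [hadd1, hadd2, hsmul1, hsmul2, hgu, hgaa, hgua, ← hz]
      simp only [_root_.map_mul, Complex.conj_ofReal]
      push_cast
      linear_combination ((t : ℂ)) * hzz + ((t : ℂ) + (t : ℂ) ^ 2 * (r : ℂ)) * hzz'
    have ineq : ∀ t : ℝ, 0 ≤ 2 * t * Complex.normSq z + t ^ 2 * Complex.normSq z * r := by
      intro t
      have h2 := hg_self (u + ((t : ℂ) * z) • a)
      rw [expand t] at h2
      have h3 : (2 * t * Complex.normSq z + t ^ 2 * Complex.normSq z * r : ℝ)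
          = ∑ k, ‖(M *ᵥ (u + ((t : ℂ) * z) • a)) k‖ ^ 2
            - μ₀ * ∑ j, ‖(u + ((t : ℂ) * z) • a) j‖ ^ 2 :=
        Complex.ofReal_inj.mp h2
      rw [h3]
      exact hg_nonneg _
    have hT : (0 : ℝ) < r + 1 := by linarith
    have h2 := ineq (-(r + 1)⁻¹)
    have h3 : 0 ≤ (r + 1) ^ 2 * (2 * -(r + 1)⁻¹ * Complex.normSq z
        + (-(r + 1)⁻¹) ^ 2 * Complex.normSq z * r) := mul_nonneg (by positivity) h2
    have h4 : (r + 1) ^ 2 * (2 * -(r + 1)⁻¹ * Complex.normSq z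
        + (-(r + 1)⁻¹) ^ 2 * Complex.normSq z * r)
        = Complex.normSq z * (r - 2 * (r + 1)) := by
      field_simp
      ring
    rw [h4] at h3
    nlinarith [h3, hnsq, hrnn]
  funext j
  have h := hzero (Pi.single j 1)
  have e1 : star (M *ᵥ Pi.single j (1 : ℂ)) ⬝ᵥ (M *ᵥ u) = ((Mᴴ * M) *ᵥ u) j := by
    rw [← Matrix.mulVec_mulVec]
    simp [Matrix.mulVec, dotProduct, Matrix.conjTranspose_apply, Matrix.mulVec_single]
  have e2 : star (Pi.single j (1 : ℂ)) ⬝ᵥ u = u j := by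
    simp [dotProduct, Pi.star_apply, Pi.single_apply, apply_ite, Finset.sum_ite_eq']
  simp only [hgdef, e1, e2] at h
  have h5 : ((Mᴴ * M) *ᵥ u) j = (μ₀ : ℂ) * u j := by linear_combination h
  simpa using h5

end Aux

/-- If the smallest singular value of the Loewner matrix is
non-degenerate, any unit coefficient vector minimizing the linearized error
yields an irreducible barycentric rational approximant without real poles that
is unitary on the real axis. -/
theorem stmt_3 (m n : ℕ) (hm : 1 ≤ m) (hn : m - 1 ≤ n)
    (y : Fin m → ℝ) (hy : Function.Injective y)
    (x : Fin n → ℝ) (hx : Function.Injective x)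
    (hxy : ∀ k j, x k ≠ y j)
    (L : Matrix (Fin n) (Fin m) ℂ)
    (hL : ∀ k j, L k j = (Complex.exp (Complex.I * (x k : ℝ)) - Complex.exp (Complex.I * (y j : ℝ)))
        / (((x k : ℝ) : ℂ) - ((y j : ℝ) : ℂ)))
    -- non-degeneracy: the eigenspace of LᴴL for its smallest eigenvalue is one-dimensional
    (hnd : ∃ μ : ℝ,
      Module.End.HasEigenvalue (Matrix.toLin' (Lᴴ * L)) (μ : ℂ) ∧
      (∀ ν : ℝ, Module.End.HasEigenvalue (Matrix.toLin' (Lᴴ * L)) (ν : ℂ) → μ ≤ ν) ∧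
      Module.finrank ℂ (Module.End.eigenspace (Matrix.toLin' (Lᴴ * L)) (μ : ℂ)) = 1)
    (w : Fin m → ℂ) (hwunit : ∑ j, ‖w j‖ ^ 2 = 1)
    (hwmin : ∀ u : Fin m → ℂ, (∑ j, ‖u j‖ ^ 2 = 1) →
      ∑ k, ‖L.mulVec w k‖ ^ 2 ≤ ∑ k, ‖L.mulVec u k‖ ^ 2)
    (p q : ℂ → ℂ)
    (hp : ∀ z, p z = ∑ j, Complex.exp (Complex.I * (y j : ℝ)) * w j
        * ∏ k ∈ Finset.univ.erase j, (z - ((y k : ℝ) : ℂ)))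
    (hq : ∀ z, q z = ∑ j, w j * ∏ k ∈ Finset.univ.erase j, (z - ((y k : ℝ) : ℂ)))
    (hirr : ∀ z : ℂ, ¬(p z = 0 ∧ q z = 0)) :
    (∀ t : ℝ, q (t : ℂ) ≠ 0) ∧
    (∀ t : ℝ, ‖p (t : ℂ) / q (t : ℂ)‖ = 1) := by
  classical
  set μ₀ : ℝ := ∑ k, ‖L.mulVec w k‖ ^ 2 with hμ₀def
  have hlb : ∀ u : Fin m → ℂ,
      μ₀ * (∑ j, ‖u j‖ ^ 2) ≤ ∑ k, ‖(L *ᵥ u) k‖ ^ 2 := by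
    intro u
    by_cases hu0 : u = 0
    · subst hu0
      simp [Matrix.mulVec_zero]
    · have hpos : 0 < ∑ j, ‖u j‖ ^ 2 := by
        obtain ⟨j, hj⟩ := Function.ne_iff.mp hu0
        refine Finset.sum_pos' (fun i _ => by positivity) ⟨j, Finset.mem_univ j, ?_⟩
        have : ‖u j‖ ≠ 0 := by simpa using hj
        positivity
      obtain ⟨s, hspos, hs2⟩ : ∃ s : ℝ, 0 < s ∧ s ^ 2 = ∑ j, ‖u j‖ ^ 2 :=
        ⟨Real.sqrt (∑ j, ‖u j‖ ^ 2), Real.sqrt_pos.mpr hpos, Real.sq_sqrt hpos.le⟩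
      have hsne : s ≠ 0 := ne_of_gt hspos
      have hinv : s⁻¹ ^ 2 * s ^ 2 = 1 := by
        rw [← mul_pow, inv_mul_cancel₀ hsne, one_pow]
      have hu'unit : ∑ j, ‖(((s⁻¹ : ℝ) : ℂ) • u) j‖ ^ 2 = 1 := by
        rw [Finset.sum_congr rfl (fun j _ => abs_smul_sq s⁻¹ u j), ← Finset.mul_sum,
          ← hs2, hinv]
      have hmin := hwmin (((s⁻¹ : ℝ) : ℂ) • u) hu'unit
      have hsum : ∑ k, ‖(L *ᵥ (((s⁻¹ : ℝ) : ℂ) • u)) k‖ ^ 2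
          = s⁻¹ ^ 2 * ∑ k, ‖(L *ᵥ u) k‖ ^ 2 := by
        rw [Finset.mul_sum]
        refine Finset.sum_congr rfl fun k _ => ?_
        rw [Matrix.mulVec_smul]
        exact abs_smul_sq s⁻¹ (L *ᵥ u) k
      rw [hsum] at hmin
      calc μ₀ * ∑ j, ‖u j‖ ^ 2 = (μ₀ * 1) * s ^ 2 := by rw [hs2]; ring
        _ ≤ (s⁻¹ ^ 2 * ∑ k, ‖(L *ᵥ u) k‖ ^ 2) * s ^ 2 := by
            apply mul_le_mul_of_nonneg_right _ (by positivity)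
            simpa using hmin
        _ = (s⁻¹ ^ 2 * s ^ 2) * ∑ k, ‖(L *ᵥ u) k‖ ^ 2 := by ring
        _ = ∑ k, ‖(L *ᵥ u) k‖ ^ 2 := by rw [hinv, one_mul]
  -- w is an eigenvector
  have hAw : (Lᴴ * L) *ᵥ w = (μ₀ : ℂ) • w :=
    min_eigen L μ₀ hlb w (by rw [hwunit, mul_one])
  -- the mirrored vector
  set w' : Fin m → ℂ := fun j => Complex.exp (-(Complex.I * (y j : ℝ))) * (starRingEnd ℂ) (w j)
    with hw'def
  have habs_exp : ∀ (c : ℝ), ‖Complex.exp (Complex.I * (c : ℝ))‖ = 1 := by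
    intro c
    rw [Complex.norm_exp]
    simp
  have habs_exp' : ∀ (c : ℝ), ‖Complex.exp (-(Complex.I * (c : ℝ)))‖ = 1 := by
    intro c
    rw [Complex.norm_exp]
    simp
  have hw'unit : ∑ j, ‖w' j‖ ^ 2 = 1 := by
    rw [← hwunit]
    refine Finset.sum_congr rfl fun j _ => ?_
    simp [hw'def, _root_.map_mul, habs_exp']
  -- Loewner symmetry
  have hentry : ∀ k j, L k j * Complex.exp (-(Complex.I * (y j : ℝ)))
      = -Complex.exp (Complex.I * (x k : ℝ)) * (starRingEnd ℂ) (L k j) := by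
    intro k j
    rw [hL k j]
    have hd : ((x k : ℝ) : ℂ) - ((y j : ℝ) : ℂ) ≠ 0 := by
      rw [sub_ne_zero]
      exact_mod_cast fun h => hxy k j (Complex.ofReal_inj.mp h)
    have hconjL : (starRingEnd ℂ) ((Complex.exp (Complex.I * (x k : ℝ))
          - Complex.exp (Complex.I * (y j : ℝ))) / (((x k : ℝ) : ℂ) - ((y j : ℝ) : ℂ)))
        = (Complex.exp (-(Complex.I * (x k : ℝ))) - Complex.exp (-(Complex.I * (y j : ℝ))))
          / (((x k : ℝ) : ℂ) - ((y j : ℝ) : ℂ)) := by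
      rw [map_div₀, map_sub, ← Complex.exp_conj, ← Complex.exp_conj]
      simp [Complex.conj_ofReal, map_sub]
    rw [hconjL, Complex.exp_neg, Complex.exp_neg]
    have ha : Complex.exp (Complex.I * (x k : ℝ)) ≠ 0 := Complex.exp_ne_zero _
    have hb : Complex.exp (Complex.I * (y j : ℝ)) ≠ 0 := Complex.exp_ne_zero _
    field_simp
    ring
  have hLw' : ∀ k, (L *ᵥ w') k
      = -Complex.exp (Complex.I * (x k : ℝ)) * (starRingEnd ℂ) ((L *ᵥ w) k) := by
    intro k
    simp only [Matrix.mulVec, dotProduct, hw'def, map_sum, _root_.map_mul]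
    rw [Finset.mul_sum]
    refine Finset.sum_congr rfl fun j _ => ?_
    calc L k j * (Complex.exp (-(Complex.I * (y j : ℝ))) * (starRingEnd ℂ) (w j))
        = (L k j * Complex.exp (-(Complex.I * (y j : ℝ)))) * (starRingEnd ℂ) (w j) := by ring
      _ = (-Complex.exp (Complex.I * (x k : ℝ)) * (starRingEnd ℂ) (L k j))
            * (starRingEnd ℂ) (w j) := by rw [hentry k j]
      _ = -Complex.exp (Complex.I * (x k : ℝ))
            * ((starRingEnd ℂ) (L k j) * (starRingEnd ℂ) (w j)) := by ring
  have hLw'norm : ∑ k, ‖(L *ᵥ w') k‖ ^ 2 = μ₀ := by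
    rw [hμ₀def]
    refine Finset.sum_congr rfl fun k _ => ?_
    rw [hLw' k]
    simp [_root_.map_mul, habs_exp]
  have hAw' : (Lᴴ * L) *ᵥ w' = (μ₀ : ℂ) • w' :=
    min_eigen L μ₀ hlb w' (by rw [hLw'norm, hw'unit, mul_one])
  -- identify eigenvalue with the minimal one
  obtain ⟨μ, hμev, hμmin, hμrank⟩ := hnd
  have hwne : w ≠ 0 := by
    intro h
    rw [h] at hwunit
    simp at hwunit
  have hμ₀ev : Module.End.HasEigenvalue (Matrix.toLin' (Lᴴ * L)) ((μ₀ : ℝ) : ℂ) := by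
    apply Module.End.hasEigenvalue_of_hasEigenvector (x := w)
    refine ⟨Module.End.mem_eigenspace_iff.mpr ?_, hwne⟩
    rw [Matrix.toLin'_apply]
    exact hAw
  have hle1 : μ ≤ μ₀ := hμmin μ₀ hμ₀ev
  have hle2 : μ₀ ≤ μ := by
    obtain ⟨v, hvmem, hvne⟩ := hμev.exists_hasEigenvector
    have hv : (Lᴴ * L) *ᵥ v = ((μ : ℝ) : ℂ) • v := by
      rw [← Matrix.toLin'_apply]
      exact Module.End.mem_eigenspace_iff.mp hvmem
    have hcalc : ((∑ k, ‖(L *ᵥ v) k‖ ^ 2 : ℝ) : ℂ)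
        = ((μ * ∑ j, ‖v j‖ ^ 2 : ℝ) : ℂ) := by
      rw [← dot_self_eq, ← adj_key L v v, hv, dotProduct_smul, dot_self_eq]
      simp only [smul_eq_mul]
      push_cast
      ring
    have hcalc' : ∑ k, ‖(L *ᵥ v) k‖ ^ 2 = μ * ∑ j, ‖v j‖ ^ 2 :=
      Complex.ofReal_inj.mp hcalc
    have hvpos : 0 < ∑ j, ‖v j‖ ^ 2 := by
      obtain ⟨j, hj⟩ := Function.ne_iff.mp hvne
      refine Finset.sum_pos' (fun i _ => by positivity) ⟨j, Finset.mem_univ j, ?_⟩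
      have : ‖v j‖ ≠ 0 := by simpa using hj
      positivity
    have hlbv := hlb v
    rw [hcalc'] at hlbv
    exact le_of_mul_le_mul_right (by linarith) hvpos
  have hμeq : μ = μ₀ := le_antisymm hle1 hle2
  -- one-dimensionality: w' is a multiple of w
  set E := Module.End.eigenspace (Matrix.toLin' (Lᴴ * L)) ((μ : ℝ) : ℂ) with hE
  have hwE : w ∈ E := by
    rw [hE, Module.End.mem_eigenspace_iff, Matrix.toLin'_apply, hμeq]
    exact hAw
  have hw'E : w' ∈ E := by
    rw [hE, Module.End.mem_eigenspace_iff, Matrix.toLin'_apply, hμeq]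
    exact hAw'
  have hspan : Submodule.span ℂ {w} = E := by
    apply Submodule.eq_of_le_of_finrank_eq
    · rw [Submodule.span_le, Set.singleton_subset_iff]
      exact hwE
    · rw [finrank_span_singleton hwne, hμrank]
  obtain ⟨c, hc⟩ := Submodule.mem_span_singleton.mp (hspan ▸ hw'E)
  -- |c| = 1
  have hcabs : ‖c‖ = 1 := by
    have h1 : ∑ j, ‖w' j‖ ^ 2 = ‖c‖ ^ 2 * ∑ j, ‖w j‖ ^ 2 := by
      rw [Finset.mul_sum]
      refine Finset.sum_congr rfl fun j _ => ?_
      rw [← hc]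
      simp [Pi.smul_apply, smul_eq_mul, _root_.map_mul, mul_pow]
    rw [hw'unit, hwunit, mul_one] at h1
    nlinarith [norm_nonneg c]
  -- conj (w j) = c * exp(I y j) * w j
  have hconjw : ∀ j, (starRingEnd ℂ) (w j) = c * Complex.exp (Complex.I * (y j : ℝ)) * w j := by
    intro j
    have h1 : w' j = c * w j := by rw [← hc]; simp
    simp only [hw'def] at h1
    have h2 : Complex.exp (Complex.I * (y j : ℝ))
        * (Complex.exp (-(Complex.I * (y j : ℝ))) * (starRingEnd ℂ) (w j))
        = Complex.exp (Complex.I * (y j : ℝ)) * (c * w j) := by rw [h1]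
    rw [← mul_assoc, ← Complex.exp_add] at h2
    simp only [add_neg_cancel, Complex.exp_zero, one_mul] at h2
    rw [h2]; ring
  -- conj (q t) = c * p t for real t
  have hqp : ∀ t : ℝ, (starRingEnd ℂ) (q (t : ℂ)) = c * p (t : ℂ) := by
    intro t
    rw [hq, hp, map_sum, Finset.mul_sum]
    refine Finset.sum_congr rfl fun j _ => ?_
    rw [_root_.map_mul, map_prod]
    have hprod : ∀ k ∈ Finset.univ.erase j,
        (starRingEnd ℂ) ((t : ℂ) - ((y k : ℝ) : ℂ)) = (t : ℂ) - ((y k : ℝ) : ℂ) := by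
      intro k _
      rw [map_sub, Complex.conj_ofReal, Complex.conj_ofReal]
    rw [Finset.prod_congr rfl hprod, hconjw j]
    ring
  have habsqp : ∀ t : ℝ, ‖q (t : ℂ)‖ = ‖p (t : ℂ)‖ := by
    intro t
    have h := congrArg (‖·‖) (hqp t)
    rwa [Complex.norm_conj, norm_mul, hcabs, one_mul] at h
  have hqne : ∀ t : ℝ, q (t : ℂ) ≠ 0 := by
    intro t hq0
    have hp0 : p (t : ℂ) = 0 := by
      have h := habsqp t
      rw [hq0] at h
      simp only [norm_zero] at h
      exact norm_eq_zero.mp h.symm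
    exact hirr (t : ℂ) ⟨hp0, hq0⟩
  refine ⟨hqne, fun t => ?_⟩
  rw [norm_div, ← habsqp t, div_self]
  exact norm_ne_zero_iff.mpr (hqne t)
end

section
/- Let x_1, …, x_n be real numbers, S_F = diag(e^{i x_1}, …, e^{i x_n}) ∈ ℂ^{n×n}, M ∈ ℝ^{n×m} a real matrix, and B = [M | −S_F M] ∈ ℂ^{n×2m} the concatenated matrix. Assume the eigenspace of BᴴB corresponding to its smallest eigenvalue is one-dimensional, and let γ = [α; β] ∈ ℂ^{2m} be a unit vector minimizing ‖Bv‖_2 over all unit vectors v ∈ ℂ^{2m}, with α, β ∈ ℂ^m. Let y_1, …, y_m be distinct real numbers, define p_b(x) = Σ_{j=1}^m α_j ∏_{k≠j}(x − y_k) and q_b(x) = Σ_{j=1}^m β_j ∏_{k≠j}(x − y_k), and assume p_b and q_b have no common complex root. Then q_b(x) ≠ 0 for every real x and |p_b(x)/q_b(x)| = 1 for every real x. -/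
open Matrix

lemma dotSelf {ι : Type*} [Fintype ι] (u : ι → ℂ) :
    star u ⬝ᵥ u = ((∑ i, ‖u i‖ ^ 2 : ℝ) : ℂ) := by
  simp [dotProduct, Complex.sq_norm, Complex.normSq_eq_conj_mul_self]

lemma conjDot {ι : Type*} [Fintype ι] (a b : ι → ℂ) :
    starRingEnd ℂ (star a ⬝ᵥ b) = star b ⬝ᵥ a := by
  simp [dotProduct, map_sum, mul_comm]

lemma expandRe {ι : Type*} [Fintype ι] (a b : ι → ℂ) (t : ℝ) :
    ((star (a + (t : ℂ) • b)) ⬝ᵥ (a + (t : ℂ) • b)).re =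
      (star a ⬝ᵥ a).re + 2 * ((star a ⬝ᵥ b).re) * t + (star b ⬝ᵥ b).re * t ^ 2 := by
  have hc : (star b ⬝ᵥ a).re = (star a ⬝ᵥ b).re := by
    rw [← conjDot a b]; simp [Complex.conj_re]
  simp only [star_add, star_smul, add_dotProduct, dotProduct_add,
    smul_dotProduct, dotProduct_smul, star_trivial, Complex.star_def,
    Complex.conj_ofReal, smul_eq_mul]
  simp [Complex.add_re, Complex.mul_re, Complex.ofReal_re, Complex.ofReal_im, hc]
  ring

lemma adjointDot {n' m' : Type*} [Fintype n'] [Fintype m'] (B : Matrix n' m' ℂ)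
    (x : n' → ℂ) (w : m' → ℂ) :
    star (Bᴴ.mulVec x) ⬝ᵥ w = star x ⬝ᵥ B.mulVec w := by
  rw [Matrix.star_mulVec, Matrix.conjTranspose_conjTranspose, ← Matrix.dotProduct_mulVec]

lemma quadLin (a b : ℝ) (h : ∀ t : ℝ, 0 ≤ a * t + b * t ^ 2) : a = 0 := by
  by_contra ha
  have hb : 0 < b := by
    rcases lt_or_gt_of_ne ha with h1 | h1
    · have := h (-1); nlinarith [h 1]
    · have := h (-1); nlinarith [h 1]
  have h1 := h (-a / (2 * b))
  have he : a * (-a / (2 * b)) + b * (-a / (2 * b)) ^ 2 = -a ^ 2 / (4 * b) := by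
    field_simp; ring
  rw [he] at h1
  have h2 : 0 < a ^ 2 := by positivity
  have : -a^2/(4*b) < 0 := by apply div_neg_of_neg_of_pos <;> nlinarith
  linarith

lemma min_eigen_s5 {n' m' : Type*} [Fintype n'] [Fintype m'] [DecidableEq m']
    (B : Matrix n' m' ℂ) (μ : ℝ)
    (hlow : ∀ v : m' → ℂ, μ * (star v ⬝ᵥ v).re ≤ (star (B.mulVec v) ⬝ᵥ B.mulVec v).re)
    (v : m' → ℂ)
    (hveq : (star (B.mulVec v) ⬝ᵥ B.mulVec v).re = μ * (star v ⬝ᵥ v).re) :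
    (Bᴴ * B).mulVec v = (μ : ℂ) • v := by
  set u : m' → ℂ := (Bᴴ * B).mulVec v - (μ : ℂ) • v with hu
  have key1 : ∀ w : m' → ℂ,
      star u ⬝ᵥ w = (star (B.mulVec v) ⬝ᵥ B.mulVec w) - (μ : ℂ) * (star v ⬝ᵥ w) := by
    intro w
    have h1 : (Bᴴ * B).mulVec v = Bᴴ.mulVec (B.mulVec v) := by
      rw [Matrix.mulVec_mulVec]
    rw [hu, h1, star_sub, sub_dotProduct, adjointDot, star_smul,
      smul_dotProduct]
    simp [smul_eq_mul, Complex.conj_ofReal]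
  have key2 : ∀ w : m' → ℂ, (star u ⬝ᵥ w).re = 0 := by
    intro w
    have hq := quadLin (2 * (star u ⬝ᵥ w).re)
      ((star (B.mulVec w) ⬝ᵥ B.mulVec w).re - μ * (star w ⬝ᵥ w).re) ?_
    · linarith
    intro t
    have h := hlow (v + (t : ℂ) • w)
    have hB : B.mulVec (v + (t : ℂ) • w) = B.mulVec v + (t : ℂ) • B.mulVec w := by
      rw [Matrix.mulVec_add, Matrix.mulVec_smul]
    rw [hB, expandRe, expandRe] at h
    have h2 : (star u ⬝ᵥ w).re =
        (star (B.mulVec v) ⬝ᵥ B.mulVec w).re - μ * (star v ⬝ᵥ w).re := by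
      rw [key1 w]; simp [Complex.sub_re, Complex.mul_re]
    rw [h2]
    linarith [h, hveq]
  have key3 : ∀ w : m' → ℂ, star u ⬝ᵥ w = 0 := by
    intro w
    have h1 := key2 w
    have h2 := key2 (Complex.I • w)
    have h3 : star u ⬝ᵥ (Complex.I • w) = Complex.I * (star u ⬝ᵥ w) := by
      rw [dotProduct_smul]; simp [smul_eq_mul]
    rw [h3] at h2
    simp [Complex.mul_re, Complex.I_re, Complex.I_im] at h2
    exact Complex.ext h1 h2
  have h4 := key3 u
  rw [dotSelf] at h4
  have h5 : ∑ i, ‖u i‖ ^ 2 = 0 := by exact_mod_cast h4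
  have h6 : u = 0 := by
    funext i
    have := (Finset.sum_eq_zero_iff_of_nonneg (fun i _ => by positivity)).mp h5 i
      (Finset.mem_univ i)
    have : ‖u i‖ = 0 := by nlinarith [norm_nonneg (u i)]
    simpa using this
  rw [hu] at h6
  exact sub_eq_zero.mp h6

lemma dotSelfRe {ι : Type*} [Fintype ι] (u : ι → ℂ) :
    (star u ⬝ᵥ u).re = ∑ i, ‖u i‖ ^ 2 := by
  rw [dotSelf, Complex.ofReal_re]

lemma sumAbsSq_smul {ι : Type*} [Fintype ι] (r : ℝ) (u : ι → ℂ) :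
    ∑ i, ‖((r : ℂ) • u) i‖ ^ 2 = r ^ 2 * ∑ i, ‖u i‖ ^ 2 := by
  rw [Finset.mul_sum]
  refine Finset.sum_congr rfl fun i _ => ?_
  simp [Pi.smul_apply, smul_eq_mul, norm_mul, mul_pow, Complex.norm_real, sq_abs]

lemma eq_zero_of_sumAbsSq {ι : Type*} [Fintype ι] (u : ι → ℂ)
    (h : ∑ i, ‖u i‖ ^ 2 = 0) : u = 0 := by
  funext i
  have h1 := (Finset.sum_eq_zero_iff_of_nonneg (fun i _ => by positivity)).mp h i
    (Finset.mem_univ i)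
  have h2 : ‖u i‖ = 0 := by nlinarith [norm_nonneg (u i)]
  simpa using h2


set_option maxHeartbeats 1000000 in
/-- If the smallest singular value of the expanded matrix
B = [M | -S_F M] is non-degenerate, a unit vector γ = [α; β] minimizing ‖Bv‖₂
yields an irreducible non-interpolatory barycentric rational approximant
without real poles that is unitary on the real axis. -/
theorem stmt_5 (m n : ℕ)
    (x : Fin n → ℝ)
    (M : Matrix (Fin n) (Fin m) ℝ)
    (B : Matrix (Fin n) (Fin m ⊕ Fin m) ℂ)
    (hBl : ∀ k j, B k (Sum.inl j) = ((M k j : ℝ) : ℂ))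
    (hBr : ∀ k j, B k (Sum.inr j) = -Complex.exp (Complex.I * (x k : ℝ)) * ((M k j : ℝ) : ℂ))
    -- non-degeneracy: the eigenspace of BᴴB for its smallest eigenvalue is one-dimensional
    (hnd : ∃ lam : ℝ,
      Module.End.HasEigenvalue (Matrix.toLin' (Bᴴ * B)) (lam : ℂ) ∧
      (∀ ν : ℝ, Module.End.HasEigenvalue (Matrix.toLin' (Bᴴ * B)) (ν : ℂ) → lam ≤ ν) ∧
      Module.finrank ℂ (Module.End.eigenspace (Matrix.toLin' (Bᴴ * B)) (lam : ℂ)) = 1)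
    (α β : Fin m → ℂ) (γ : Fin m ⊕ Fin m → ℂ) (hγ : γ = Sum.elim α β)
    (hγunit : ∑ i, ‖γ i‖ ^ 2 = 1)
    (hγmin : ∀ v : Fin m ⊕ Fin m → ℂ, (∑ i, ‖v i‖ ^ 2 = 1) →
      ∑ k, ‖B.mulVec γ k‖ ^ 2 ≤ ∑ k, ‖B.mulVec v k‖ ^ 2)
    (y : Fin m → ℝ) (hy : Function.Injective y)
    (pb qb : ℂ → ℂ)
    (hpb : ∀ z, pb z = ∑ j, α j * ∏ k ∈ Finset.univ.erase j, (z - ((y k : ℝ) : ℂ)))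
    (hqb : ∀ z, qb z = ∑ j, β j * ∏ k ∈ Finset.univ.erase j, (z - ((y k : ℝ) : ℂ)))
    (hirr : ∀ z : ℂ, ¬(pb z = 0 ∧ qb z = 0)) :
    (∀ t : ℝ, qb (t : ℂ) ≠ 0) ∧
    (∀ t : ℝ, ‖pb (t : ℂ) / qb (t : ℂ)‖ = 1) := by
  classical
  set μ : ℝ := ∑ k, ‖B.mulVec γ k‖ ^ 2 with hμ
  -- lower bound for the quadratic form
  have hlow0 : ∀ v : Fin m ⊕ Fin m → ℂ,
      μ * ∑ i, ‖v i‖ ^ 2 ≤ ∑ k, ‖B.mulVec v k‖ ^ 2 := by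
    intro v
    by_cases hN : ∑ i, ‖v i‖ ^ 2 = 0
    · have hv0 : v = 0 := eq_zero_of_sumAbsSq v hN
      subst hv0
      simp [Matrix.mulVec_zero, hN]
    · have hnn : (0:ℝ) ≤ ∑ i, ‖v i‖ ^ 2 :=
        Finset.sum_nonneg fun i _ => by positivity
      have hNpos : 0 < ∑ i, ‖v i‖ ^ 2 := lt_of_le_of_ne hnn (Ne.symm hN)
      set s : ℝ := Real.sqrt (∑ i, ‖v i‖ ^ 2) with hs
      have hsq : s ^ 2 = ∑ i, ‖v i‖ ^ 2 := Real.sq_sqrt hnn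
      have hspos : 0 < s := Real.sqrt_pos.mpr hNpos
      have hunit : ∑ i, ‖(((s⁻¹ : ℝ) : ℂ) • v) i‖ ^ 2 = 1 := by
        rw [sumAbsSq_smul, ← hsq, inv_pow, inv_mul_cancel₀ (pow_ne_zero 2 (ne_of_gt hspos))]
      have h1 := hγmin (((s⁻¹ : ℝ) : ℂ) • v) hunit
      have h2 : ∑ k, ‖B.mulVec (((s⁻¹:ℝ):ℂ) • v) k‖ ^ 2 =
          (s⁻¹) ^ 2 * ∑ k, ‖B.mulVec v k‖ ^ 2 := by
        rw [Matrix.mulVec_smul, sumAbsSq_smul]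
      rw [h2] at h1
      have h3 : (s⁻¹)^2 * (s^2) = 1 := by
        rw [inv_pow, inv_mul_cancel₀ (pow_ne_zero 2 (ne_of_gt hspos))]
      have h4 : μ * s ^ 2 ≤ (s⁻¹ ^ 2 * ∑ k, ‖B.mulVec v k‖ ^ 2) * s ^ 2 :=
        mul_le_mul_of_nonneg_right h1 (sq_nonneg s)
      have h5 : (s⁻¹ ^ 2 * ∑ k, ‖B.mulVec v k‖ ^ 2) * s ^ 2 =
          ∑ k, ‖B.mulVec v k‖ ^ 2 := by
        rw [mul_comm (s⁻¹ ^ 2) _, mul_assoc, h3, mul_one]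
      rw [h5, hsq] at h4
      exact h4
  have hlow : ∀ v : Fin m ⊕ Fin m → ℂ,
      μ * (star v ⬝ᵥ v).re ≤ (star (B.mulVec v) ⬝ᵥ B.mulVec v).re := by
    intro v; rw [dotSelfRe, dotSelfRe]; exact hlow0 v
  have heigγ : (Bᴴ * B).mulVec γ = (μ : ℂ) • γ := by
    apply min_eigen_s5 B μ hlow γ
    rw [dotSelfRe, dotSelfRe, hγunit, ← hμ, mul_one]
  have hγne : γ ≠ 0 := by
    intro h; rw [h] at hγunit; simp at hγunit
  have hmemγ : γ ∈ Module.End.eigenspace (Matrix.toLin' (Bᴴ * B)) ((μ : ℝ) : ℂ) := by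
    rw [Module.End.mem_eigenspace_iff, Matrix.toLin'_apply, heigγ]
  obtain ⟨lam, hlam1, hlam2, hlam3⟩ := hnd
  have hevμ : Module.End.HasEigenvalue (Matrix.toLin' (Bᴴ * B)) ((μ : ℂ)) :=
    Module.End.hasEigenvalue_of_hasEigenvector ⟨hmemγ, hγne⟩
  have hμlam : μ = lam := by
    refine le_antisymm ?_ (hlam2 μ hevμ)
    obtain ⟨u, hu⟩ := hlam1.exists_hasEigenvector
    have hAu : (Bᴴ * B).mulVec u = ((lam : ℝ) : ℂ) • u := by
      have h := Module.End.mem_eigenspace_iff.mp hu.1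
      rwa [Matrix.toLin'_apply] at h
    have hQu : (star (B.mulVec u) ⬝ᵥ B.mulVec u) = (lam : ℂ) * (star u ⬝ᵥ u) := by
      have h1 := adjointDot Bᴴ u (B.mulVec u)
      rw [Matrix.conjTranspose_conjTranspose] at h1
      rw [h1, Matrix.mulVec_mulVec, hAu, dotProduct_smul, smul_eq_mul]
    have hQuRe : (star (B.mulVec u) ⬝ᵥ B.mulVec u).re = lam * (star u ⬝ᵥ u).re := by
      rw [hQu]; simp [Complex.mul_re]
    have hNu : 0 < (star u ⬝ᵥ u).re := by
      rw [dotSelfRe]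
      rcases lt_or_eq_of_le (Finset.sum_nonneg
        (fun i (_ : i ∈ Finset.univ) => (by positivity : (0:ℝ) ≤ ‖u i‖ ^ 2))) with h | h
      · exact h
      · exact absurd (eq_zero_of_sumAbsSq u h.symm) hu.2
    have h2 := hlow u
    rw [hQuRe] at h2
    exact le_of_mul_le_mul_right h2 hNu
  -- the conjugate-reflected vector
  set γ' : Fin m ⊕ Fin m → ℂ :=
    Sum.elim (fun j => (starRingEnd ℂ) (β j)) (fun j => (starRingEnd ℂ) (α j)) with hγ'
  have hBγ' : ∀ k, B.mulVec γ' k =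
      -Complex.exp (Complex.I * (x k : ℝ)) * (starRingEnd ℂ) (B.mulVec γ k) := by
    intro k
    set e : ℂ := Complex.exp (Complex.I * (x k : ℝ)) with hee
    have hece : e * (starRingEnd ℂ) e = 1 := by
      rw [hee, ← Complex.exp_conj, _root_.map_mul, Complex.conj_I, Complex.conj_ofReal,
        ← Complex.exp_add]
      ring_nf
      exact Complex.exp_zero
    have hL : B.mulVec γ' k =
        (∑ j, (M k j : ℂ) * (starRingEnd ℂ) (β j)) +
          (-e) * ∑ j, (M k j : ℂ) * (starRingEnd ℂ) (α j) := by
      rw [Matrix.mulVec, dotProduct, Fintype.sum_sum_type, Finset.mul_sum]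
      congr 1
      · refine Finset.sum_congr rfl fun j _ => ?_
        rw [hBl, hγ']; simp
      · refine Finset.sum_congr rfl fun j _ => ?_
        rw [hBr, hγ']; simp [hee]; ring
    have hR : (starRingEnd ℂ) (B.mulVec γ k) =
        (∑ j, (M k j : ℂ) * (starRingEnd ℂ) (α j)) +
          ((starRingEnd ℂ) (-e)) * ∑ j, (M k j : ℂ) * (starRingEnd ℂ) (β j) := by
      rw [Matrix.mulVec, dotProduct, Fintype.sum_sum_type, map_add, map_sum,
        map_sum, Finset.mul_sum]
      congr 1
      · refine Finset.sum_congr rfl fun j _ => ?_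
        rw [hBl, hγ]; simp [Complex.conj_ofReal]
      · refine Finset.sum_congr rfl fun j _ => ?_
        rw [hBr, hγ]; simp [hee, Complex.conj_ofReal]; ring
    rw [hL, hR]
    rw [map_neg]
    ring_nf
    rw [mul_comm e ((starRingEnd ℂ) e)] at hece
    calc (∑ j, (M k j : ℂ) * (starRingEnd ℂ) (β j)) -
          e * ∑ j, (M k j : ℂ) * (starRingEnd ℂ) (α j)
        = ((starRingEnd ℂ) e * e) * (∑ j, (M k j : ℂ) * (starRingEnd ℂ) (β j)) -
          e * ∑ j, (M k j : ℂ) * (starRingEnd ℂ) (α j) := by rw [hece, one_mul]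
      _ = _ := by ring
  have hQγ' : ∑ k, ‖B.mulVec γ' k‖ ^ 2 = μ := by
    rw [hμ]
    refine Finset.sum_congr rfl fun k _ => ?_
    rw [hBγ' k]
    simp [norm_mul, Complex.norm_conj, Complex.norm_exp, Complex.mul_re]
  have hNγ' : ∑ i, ‖γ' i‖ ^ 2 = 1 := by
    rw [← hγunit, Fintype.sum_sum_type, Fintype.sum_sum_type, hγ, hγ']
    simp only [Sum.elim_inl, Sum.elim_inr, map_apply]
    simp [Complex.norm_conj]
    ring
  have heigγ' : (Bᴴ * B).mulVec γ' = (μ : ℂ) • γ' := by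
    apply min_eigen_s5 B μ hlow γ'
    rw [dotSelfRe, dotSelfRe, hNγ', hQγ', mul_one]
  have hmemγ' : γ' ∈ Module.End.eigenspace (Matrix.toLin' (Bᴴ * B)) ((lam : ℝ) : ℂ) := by
    rw [Module.End.mem_eigenspace_iff, Matrix.toLin'_apply, heigγ', hμlam]
  rw [hμlam] at hmemγ
  -- one-dimensionality gives proportionality
  obtain ⟨c, hc⟩ := (finrank_eq_one_iff_of_nonzero'
    (⟨γ, hmemγ⟩ : Module.End.eigenspace (Matrix.toLin' (Bᴴ * B)) ((lam : ℝ) : ℂ))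
    (by simpa using hγne)).mp hlam3 ⟨γ', hmemγ'⟩
  have hcγ : c • γ = γ' := by
    have := congrArg Subtype.val hc
    simpa using this
  have hcb : ∀ j, (starRingEnd ℂ) (β j) = c * α j := by
    intro j
    have h := congrFun hcγ (Sum.inl j)
    rw [hγ, hγ'] at h
    simpa [Pi.smul_apply, smul_eq_mul] using h.symm
  have hca : ∀ j, (starRingEnd ℂ) (α j) = c * β j := by
    intro j
    have h := congrFun hcγ (Sum.inr j)
    rw [hγ, hγ'] at h
    simpa [Pi.smul_apply, smul_eq_mul] using h.symm
  have hcne : c ≠ 0 := by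
    intro h0
    rw [h0, zero_smul] at hcγ
    rw [← hcγ] at hNγ'
    simp at hNγ'
  have hconjq : ∀ t : ℝ, (starRingEnd ℂ) (qb (t : ℂ)) = c * pb (t : ℂ) := by
    intro t
    rw [hqb, hpb, map_sum, Finset.mul_sum]
    refine Finset.sum_congr rfl fun j _ => ?_
    rw [_root_.map_mul, map_prod, hcb]
    have hp : ∀ k' ∈ Finset.univ.erase j,
        (starRingEnd ℂ) ((t : ℂ) - ((y k' : ℝ) : ℂ)) = (t : ℂ) - ((y k' : ℝ) : ℂ) :=
      fun k' _ => by rw [map_sub, Complex.conj_ofReal, Complex.conj_ofReal]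
    rw [Finset.prod_congr rfl hp]
    ring
  have hconjp : ∀ t : ℝ, (starRingEnd ℂ) (pb (t : ℂ)) = c * qb (t : ℂ) := by
    intro t
    rw [hqb, hpb, map_sum, Finset.mul_sum]
    refine Finset.sum_congr rfl fun j _ => ?_
    rw [_root_.map_mul, map_prod, hca]
    have hp : ∀ k' ∈ Finset.univ.erase j,
        (starRingEnd ℂ) ((t : ℂ) - ((y k' : ℝ) : ℂ)) = (t : ℂ) - ((y k' : ℝ) : ℂ) :=
      fun k' _ => by rw [map_sub, Complex.conj_ofReal, Complex.conj_ofReal]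
    rw [Finset.prod_congr rfl hp]
    ring
  have hqne : ∀ t : ℝ, qb (t : ℂ) ≠ 0 := by
    intro t h0
    have h1 := hconjq t
    rw [h0, map_zero] at h1
    have h2 : pb (t : ℂ) = 0 := by
      rcases mul_eq_zero.mp h1.symm with h | h
      · exact absurd h hcne
      · exact h
    exact hirr t ⟨h2, h0⟩
  refine ⟨hqne, fun t => ?_⟩
  have hqt : (0 : ℝ) < ‖qb (t : ℂ)‖ := norm_pos_iff.mpr (hqne t)
  have e1 : ‖qb (t : ℂ)‖ = ‖c‖ * ‖pb (t : ℂ)‖ := by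
    rw [← Complex.norm_conj (qb (t : ℂ)), hconjq, norm_mul]
  have e2 : ‖pb (t : ℂ)‖ = ‖c‖ * ‖qb (t : ℂ)‖ := by
    rw [← Complex.norm_conj (pb (t : ℂ)), hconjp, norm_mul]
  have habsc : ‖c‖ = 1 := by
    have h4 : (1:ℝ) * ‖qb (t : ℂ)‖ =
        ‖c‖ ^ 2 * ‖qb (t : ℂ)‖ := by
      nth_rewrite 1 [e1]
      rw [e2]; ring
    have h5 : ‖c‖ ^ 2 = 1 := (mul_right_cancel₀ (ne_of_gt hqt) h4).symm
    have h7 : (‖c‖ - 1) * (‖c‖ + 1) = 0 := by linear_combination h5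
    rcases mul_eq_zero.mp h7 with h | h
    · linarith
    · nlinarith [norm_nonneg c]
  rw [norm_div, e2, habsc, one_mul, div_self (ne_of_gt hqt)]
end

section
/- Let x_1, …, x_n and y_1, …, y_m be real numbers, S_F = diag(e^{i x_1}, …, e^{i x_n}) ∈ ℂ^{n×n}, S_f = diag(e^{i y_1}, …, e^{i y_m}) ∈ ℂ^{m×m}, and let K ∈ ℂ^{m×m} and R ∈ ℂ^{n×n} be the diagonal matrices with K_{jj} = (1 − e^{−i y_j})/|1 − e^{−i y_j}| if e^{−i y_j} ≠ 1, K_{jj} = i otherwise, and R_{kk} = (1 − e^{−i x_k})/|1 − e^{−i x_k}| if e^{−i x_k} ≠ 1, R_{kk} = i otherwise. Let M ∈ ℝ^{n×m} be a real matrix, A = S_F M − M S_f ∈ ℂ^{n×m}, and Â = −i R A K, which is a real matrix. Suppose Â V̂ = Û S where V̂ ∈ ℝ^{m×m} satisfies V̂ᵀV̂ = I, Û ∈ ℝ^{n×m} satisfies ÛᵀÛ = I, and S ∈ ℝ^{m×m} is diagonal with nonnegative entries. Then the matrices U = −conj(R) Û ∈ ℂ^{n×m} and V = i K V̂ ∈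 ℂ^{m×m} satisfy A V = U S, Vᴴ V = I, and Uᴴ U = I; that is, V and U are orthonormal bases of right and left singular vectors of A. -/
open Matrix
open scoped Classical

lemma unit_entry (z : ℂ) :
    (starRingEnd ℂ) (if z ≠ 1 then (1 - z) / ((‖1-z‖ : ℝ) : ℂ) else Complex.I) *
    (if z ≠ 1 then (1 - z) / ((‖1-z‖ : ℝ) : ℂ) else Complex.I) = 1 := by
  split_ifs with h
  · have h0 : (1 : ℂ) - z ≠ 0 := sub_ne_zero.mpr (Ne.symm h)
    have habs : ‖(1 - z) / ((‖1-z‖ : ℝ) : ℂ)‖ = 1 := by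
      rw [norm_div, Complex.norm_real, norm_norm,
        div_self (by simpa [sub_eq_zero] using h0)]
    have := Complex.mul_conj ((1 - z) / ((‖1-z‖ : ℝ) : ℂ))
    rw [mul_comm] at this
    rw [this, Complex.normSq_eq_norm_sq, habs]; norm_num
  · simp [Complex.conj_I]

lemma map_coe_conjT {p q : ℕ} (X : Matrix (Fin p) (Fin q) ℝ) :
    (X.map (fun a => (a : ℂ)))ᴴ = Xᵀ.map (fun a => (a : ℂ)) := by
  ext i j; simp [conjTranspose_apply, Complex.conj_ofReal]

lemma map_coe_mul {p q r : ℕ} (X : Matrix (Fin p) (Fin q) ℝ) (Y : Matrix (Fin q) (Fin r) ℝ) :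
    (X * Y).map (fun a => (a : ℂ)) = X.map (fun a => (a : ℂ)) * Y.map (fun a => (a : ℂ)) := by
  ext i j; simp [Matrix.mul_apply]

lemma map_coe_one {p : ℕ} :
    (1 : Matrix (Fin p) (Fin p) ℝ).map (fun a => (a : ℂ)) = 1 := by
  ext i j; simp [Matrix.one_apply, apply_ite]

theorem stmt_7 (m n : ℕ)
    (x : Fin n → ℝ) (y : Fin m → ℝ)
    (SF : Matrix (Fin n) (Fin n) ℂ)
    (hSF : SF = Matrix.diagonal fun k => Complex.exp (Complex.I * (x k : ℝ)))
    (Sf : Matrix (Fin m) (Fin m) ℂ)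
    (hSf : Sf = Matrix.diagonal fun j => Complex.exp (Complex.I * (y j : ℝ)))
    (K : Matrix (Fin m) (Fin m) ℂ)
    (hK : K = Matrix.diagonal fun j =>
      if Complex.exp (-(Complex.I * (y j : ℝ))) ≠ 1 then
        (1 - Complex.exp (-(Complex.I * (y j : ℝ))))
          / ((‖1 - Complex.exp (-(Complex.I * (y j : ℝ)))‖ : ℝ) : ℂ)
      else Complex.I)
    (R : Matrix (Fin n) (Fin n) ℂ)
    (hR : R = Matrix.diagonal fun k =>
      if Complex.exp (-(Complex.I * (x k : ℝ))) ≠ 1 then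
        (1 - Complex.exp (-(Complex.I * (x k : ℝ))))
          / ((‖1 - Complex.exp (-(Complex.I * (x k : ℝ)))‖ : ℝ) : ℂ)
      else Complex.I)
    (M : Matrix (Fin n) (Fin m) ℝ)
    (A : Matrix (Fin n) (Fin m) ℂ)
    (hA : A = SF * M.map (fun a => (a : ℂ)) - M.map (fun a => (a : ℂ)) * Sf)
    -- Â = -i R A K is a real matrix:
    (Ahat : Matrix (Fin n) (Fin m) ℝ)
    (hAhat : Ahat.map (fun a => (a : ℂ)) = (-Complex.I) • (R * A * K))
    -- real singular value decomposition of Â: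
    (Vhat : Matrix (Fin m) (Fin m) ℝ) (Uhat : Matrix (Fin n) (Fin m) ℝ)
    (S : Matrix (Fin m) (Fin m) ℝ)
    (hsvd : Ahat * Vhat = Uhat * S)
    (hV : Vhatᵀ * Vhat = 1) (hU : Uhatᵀ * Uhat = 1)
    (hS : ∃ σ : Fin m → ℝ, S = Matrix.diagonal σ ∧ ∀ i, 0 ≤ σ i)
    (U : Matrix (Fin n) (Fin m) ℂ)
    (hUdef : U = -((R.map (starRingEnd ℂ)) * Uhat.map (fun a => (a : ℂ))))
    (V : Matrix (Fin m) (Fin m) ℂ)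
    (hVdef : V = Complex.I • (K * Vhat.map (fun a => (a : ℂ)))) :
    A * V = U * S.map (fun a => (a : ℂ)) ∧ Vᴴ * V = 1 ∧ Uᴴ * U = 1 := by
  -- key unitarity facts about the diagonal matrices R and K
  have hKstar : K.map (starRingEnd ℂ) * K = 1 := by
    rw [hK, Matrix.diagonal_map (map_zero _), Matrix.diagonal_mul_diagonal]
    rw [show (fun j => (starRingEnd ℂ)
        (if Complex.exp (-(Complex.I * (y j : ℝ))) ≠ 1 then
          (1 - Complex.exp (-(Complex.I * (y j : ℝ))))
            / ((‖1 - Complex.exp (-(Complex.I * (y j : ℝ)))‖ : ℝ) : ℂ)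
        else Complex.I) *
        (if Complex.exp (-(Complex.I * (y j : ℝ))) ≠ 1 then
          (1 - Complex.exp (-(Complex.I * (y j : ℝ))))
            / ((‖1 - Complex.exp (-(Complex.I * (y j : ℝ)))‖ : ℝ) : ℂ)
        else Complex.I)) = fun _ => (1 : ℂ) from funext fun j => unit_entry _,
      Matrix.diagonal_one]
  have hRstar : R.map (starRingEnd ℂ) * R = 1 := by
    rw [hR, Matrix.diagonal_map (map_zero _), Matrix.diagonal_mul_diagonal]
    rw [show (fun k => (starRingEnd ℂ)
        (if Complex.exp (-(Complex.I * (x k : ℝ))) ≠ 1 then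
          (1 - Complex.exp (-(Complex.I * (x k : ℝ))))
            / ((‖1 - Complex.exp (-(Complex.I * (x k : ℝ)))‖ : ℝ) : ℂ)
        else Complex.I) *
        (if Complex.exp (-(Complex.I * (x k : ℝ))) ≠ 1 then
          (1 - Complex.exp (-(Complex.I * (x k : ℝ))))
            / ((‖1 - Complex.exp (-(Complex.I * (x k : ℝ)))‖ : ℝ) : ℂ)
        else Complex.I)) = fun _ => (1 : ℂ) from funext fun k => unit_entry _,
      Matrix.diagonal_one]
  have hRstar' : R * R.map (starRingEnd ℂ) = 1 := by
    rw [hR, Matrix.diagonal_map (map_zero _), Matrix.diagonal_mul_diagonal]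
    rw [show (fun k =>
        (if Complex.exp (-(Complex.I * (x k : ℝ))) ≠ 1 then
          (1 - Complex.exp (-(Complex.I * (x k : ℝ))))
            / ((‖1 - Complex.exp (-(Complex.I * (x k : ℝ)))‖ : ℝ) : ℂ)
        else Complex.I) *
        (starRingEnd ℂ)
        (if Complex.exp (-(Complex.I * (x k : ℝ))) ≠ 1 then
          (1 - Complex.exp (-(Complex.I * (x k : ℝ))))
            / ((‖1 - Complex.exp (-(Complex.I * (x k : ℝ)))‖ : ℝ) : ℂ)
        else Complex.I)) = fun _ => (1 : ℂ) from
      funext fun k => by rw [mul_comm]; exact unit_entry _, Matrix.diagonal_one]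
  have hKH : Kᴴ = K.map (starRingEnd ℂ) := by
    rw [hK, Matrix.diagonal_map (map_zero _), Matrix.diagonal_conjTranspose]
    rfl
  have hRconjH : (R.map (starRingEnd ℂ))ᴴ = R := by
    rw [hR]
    ext i j
    rcases eq_or_ne i j with h | h
    · subst h
      simp [conjTranspose_apply, Matrix.map_apply, Matrix.diagonal_apply_eq]
    · simp [conjTranspose_apply, Matrix.map_apply, Matrix.diagonal_apply_ne _ h,
        Matrix.diagonal_apply_ne _ h.symm]
  -- step 1: R A K = i Â
  have h1 : R * A * K = Complex.I • Ahat.map (fun a => (a : ℂ)) := by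
    rw [hAhat, smul_smul]
    simp [Complex.I_mul_I]
  -- step 2: A K = i conj(R) Â
  have h2 : A * K = Complex.I • (R.map (starRingEnd ℂ) * Ahat.map (fun a => (a : ℂ))) := by
    have h3 := congrArg (fun X => R.map (starRingEnd ℂ) * X) h1
    simp only [Matrix.mul_smul] at h3
    rw [← Matrix.mul_assoc, ← Matrix.mul_assoc, hRstar, Matrix.one_mul] at h3
    exact h3
  refine ⟨?_, ?_, ?_⟩
  · -- A V = U S
    calc A * V = (Complex.I * Complex.I) •
        (R.map (starRingEnd ℂ) * Ahat.map (fun a => (a : ℂ)) * Vhat.map (fun a => (a : ℂ))) := by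
          rw [hVdef, Matrix.mul_smul, ← Matrix.mul_assoc, h2, Matrix.smul_mul, smul_smul]
      _ = -(R.map (starRingEnd ℂ) * ((Ahat * Vhat).map (fun a => (a : ℂ)))) := by
          rw [Complex.I_mul_I, neg_one_smul, map_coe_mul, Matrix.mul_assoc]
      _ = U * S.map (fun a => (a : ℂ)) := by
          rw [hsvd, map_coe_mul, hUdef, Matrix.neg_mul, ← Matrix.mul_assoc]
  · -- Vᴴ V = 1
    rw [hVdef, Matrix.conjTranspose_smul, Matrix.conjTranspose_mul, Matrix.smul_mul,
      Matrix.mul_smul, smul_smul]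
    have : star Complex.I * Complex.I = 1 := by
      simp [Complex.star_def, Complex.conj_I]
    rw [this, one_smul, Matrix.mul_assoc, ← Matrix.mul_assoc Kᴴ, hKH, hKstar,
      Matrix.one_mul, map_coe_conjT, ← map_coe_mul, hV, map_coe_one]
  · -- Uᴴ U = 1
    rw [hUdef, Matrix.conjTranspose_neg, Matrix.conjTranspose_mul, Matrix.neg_mul,
      Matrix.mul_neg, neg_neg, hRconjH, Matrix.mul_assoc,
      ← Matrix.mul_assoc R, hRstar', Matrix.one_mul, map_coe_conjT, ← map_coe_mul,
      hU, map_coe_one]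
end

section
/- Let Θ ∈ ℂ^{n×m}, B = [Θ | conj(Θ)] ∈ ℂ^{n×2m}, and B̂ = [Re(Θ) | −Im(Θ)] ∈ ℝ^{n×2m}, where Re and Im are taken entrywise. Let Q = (1/√2) [[I_m, i I_m], [I_m, −i I_m]] ∈ ℂ^{2m×2m} (block form), which satisfies QᴴQ = I_{2m}. Suppose B̂ V̂_B = Û_B Ŝ_B where V̂_B ∈ ℝ^{2m×2m} satisfies V̂_Bᵀ V̂_B = I, Û_B ∈ ℝ^{n×2m} satisfies Û_Bᵀ Û_B = I, and Ŝ_B ∈ ℝ^{2m×2m} is diagonal with nonnegative entries. Then Ṽ_B = Q V̂_B satisfies B Ṽ_B = Û_B (√2 · Ŝ_B) and Ṽ_Bᴴ Ṽ_B = I; that is, Ṽ_B and Û_B are orthonormal bases of right and left singular vectors of B, whose singular values are √2 times those of B̂. -/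
open Matrix

/-- From a real SVD of B̂ = [Re(Θ) | -Im(Θ)] one obtains, via the
unitary matrix Q, orthonormal bases Ṽ_B = Q V̂_B and Û_B of right and left
singular vectors of B = [Θ | conj(Θ)], with singular values √2 times those of B̂. -/
theorem stmt_8 (m n : ℕ)
    (Θ : Matrix (Fin n) (Fin m) ℂ)
    (B : Matrix (Fin n) (Fin m ⊕ Fin m) ℂ)
    (hBl : ∀ k j, B k (Sum.inl j) = Θ k j)
    (hBr : ∀ k j, B k (Sum.inr j) = starRingEnd ℂ (Θ k j))
    (Bhat : Matrix (Fin n) (Fin m ⊕ Fin m) ℝ)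
    (hBhatl : ∀ k j, Bhat k (Sum.inl j) = (Θ k j).re)
    (hBhatr : ∀ k j, Bhat k (Sum.inr j) = -(Θ k j).im)
    (Q : Matrix (Fin m ⊕ Fin m) (Fin m ⊕ Fin m) ℂ)
    (hQ : Q = ((Real.sqrt 2 : ℂ))⁻¹ •
      Matrix.fromBlocks (1 : Matrix (Fin m) (Fin m) ℂ) (Complex.I • 1) 1 (-(Complex.I • 1)))
    -- real singular value decomposition of B̂:
    (VhatB : Matrix (Fin m ⊕ Fin m) (Fin m ⊕ Fin m) ℝ)
    (UhatB : Matrix (Fin n) (Fin m ⊕ Fin m) ℝ)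
    (ShatB : Matrix (Fin m ⊕ Fin m) (Fin m ⊕ Fin m) ℝ)
    (hsvd : Bhat * VhatB = UhatB * ShatB)
    (hV : VhatBᵀ * VhatB = 1) (hU : UhatBᵀ * UhatB = 1)
    (hS : ∃ σ : Fin m ⊕ Fin m → ℝ, ShatB = Matrix.diagonal σ ∧ ∀ i, 0 ≤ σ i)
    (VtildeB : Matrix (Fin m ⊕ Fin m) (Fin m ⊕ Fin m) ℂ)
    (hVtilde : VtildeB = Q * VhatB.map (fun a => (a : ℂ))) :
    Qᴴ * Q = 1 ∧
    B * VtildeB = UhatB.map (fun a => (a : ℂ)) * ((Real.sqrt 2 • ShatB).map (fun a => (a : ℂ))) ∧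
    VtildeBᴴ * VtildeB = 1 := by
  have h2 : (Real.sqrt 2 : ℂ) * (Real.sqrt 2 : ℂ) = 2 := by
    norm_cast; exact Real.mul_self_sqrt (by norm_num)
  have hne : (Real.sqrt 2 : ℂ) ≠ 0 := by
    intro h; rw [h, mul_zero] at h2; norm_num at h2
  have hQQ : Qᴴ * Q = 1 := by
    rw [hQ, Matrix.conjTranspose_smul, Matrix.smul_mul, Matrix.mul_smul, smul_smul,
      Matrix.fromBlocks_conjTranspose, Matrix.fromBlocks_multiply]
    simp [Complex.conj_ofReal, Matrix.mul_smul, Matrix.smul_mul, smul_smul, Complex.I_mul_I]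
    have hcc : ((Real.sqrt 2 : ℂ))⁻¹ * ((Real.sqrt 2 : ℂ))⁻¹ * 2 = 1 := by
      rw [← mul_inv, h2]; norm_num
    ext i j
    rcases i with i | i <;> rcases j with j | j <;>
      simp [Matrix.one_apply, smul_smul, mul_ite, hcc] <;>
      split <;> first | rfl | simp | linear_combination hcc
  have hBQ : B * Q = (Real.sqrt 2 : ℂ) • Bhat.map (fun a => (a : ℂ)) := by
    ext k j
    rw [hQ]
    rcases j with j | j <;>
      simp [Matrix.mul_apply, Fintype.sum_sum_type, Matrix.one_apply, mul_ite,
        Finset.sum_ite_eq, hBl, hBr, hBhatl, hBhatr]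
    · field_simp
      rw [Complex.add_conj]
      push_cast
      ring_nf
      linear_combination (-((Θ k j).re:ℂ)) * h2
    · field_simp
      have hsub := Complex.sub_conj (Θ k j)
      push_cast at hsub
      linear_combination Complex.I * hsub + (2*((Θ k j).im:ℂ)) * Complex.I_sq + (((Θ k j).im:ℂ)) * h2
  refine ⟨hQQ, ?_, ?_⟩
  · have hmap : (Bhat * VhatB).map (fun a => (a : ℂ))
        = Bhat.map (fun a => (a : ℂ)) * VhatB.map (fun a => (a : ℂ)) :=
      Matrix.map_mul (f := Complex.ofRealHom)
    have hmap2 : (UhatB * ShatB).map (fun a => (a : ℂ))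
        = UhatB.map (fun a => (a : ℂ)) * ShatB.map (fun a => (a : ℂ)) :=
      Matrix.map_mul (f := Complex.ofRealHom)
    have hsmap : (Real.sqrt 2 • ShatB).map (fun a => (a : ℂ))
        = (Real.sqrt 2 : ℂ) • ShatB.map (fun a => (a : ℂ)) := by
      ext i j; simp
    rw [hVtilde, ← Matrix.mul_assoc, hBQ, Matrix.smul_mul, ← hmap, hsvd, hmap2, hsmap,
      Matrix.mul_smul]
  · have hstar : (VhatB.map (fun a => (a : ℂ)))ᴴ = VhatBᵀ.map (fun a => (a : ℂ)) := by
      ext i j; simp [Matrix.conjTranspose_apply, Complex.conj_ofReal]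
    have hmapV : (VhatBᵀ * VhatB).map (fun a => (a : ℂ))
        = VhatBᵀ.map (fun a => (a : ℂ)) * VhatB.map (fun a => (a : ℂ)) :=
      Matrix.map_mul (f := Complex.ofRealHom)
    rw [hVtilde, Matrix.conjTranspose_mul, Matrix.mul_assoc, ← Matrix.mul_assoc Qᴴ, hQQ,
      Matrix.one_mul, hstar, ← hmapV, hV]
    ext i j
    simp [Matrix.one_apply, apply_ite]
end

section
/- Let x_1, …, x_n and y_1, …, y_m be real numbers, S_F = diag(e^{i x_1}, …, e^{i x_n}), S_f = diag(e^{i y_1}, …, e^{i y_m}), and let K ∈ ℂ^{m×m}, R ∈ ℂ^{n×n} be the diagonal matrices with K_{jj} = (1 − e^{−i y_j})/|1 − e^{−i y_j}| if e^{−i y_j} ≠ 1, K_{jj} = i otherwise, and R_{kk} = (1 − e^{−i x_k})/|1 − e^{−i x_k}| if e^{−i x_k} ≠ 1, R_{kk} = i otherwise. Let M ∈ ℝ^{n×m} be real and A = S_F M − M S_f. Then the matrix Â = −i R A K has all entries real, and Â = 2 Im(R M Kᴴ), where Im is the entrywise imaginary part. -/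
open Matrix
open scoped Classical

lemma rprop (θ : ℝ) :
    Complex.exp (Complex.I * θ) *
      (if Complex.exp (-(Complex.I * θ)) ≠ 1 then
        (1 - Complex.exp (-(Complex.I * θ)))
          / ((‖1 - Complex.exp (-(Complex.I * θ))‖ : ℝ) : ℂ)
      else Complex.I) =
    -(starRingEnd ℂ) (if Complex.exp (-(Complex.I * θ)) ≠ 1 then
        (1 - Complex.exp (-(Complex.I * θ)))
          / ((‖1 - Complex.exp (-(Complex.I * θ))‖ : ℝ) : ℂ)
      else Complex.I) := by
  have hinv : Complex.exp (Complex.I * θ) * Complex.exp (-(Complex.I * θ)) = 1 := by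
    rw [← Complex.exp_add]; simp
  have hconj : (starRingEnd ℂ) (Complex.exp (-(Complex.I * θ))) = Complex.exp (Complex.I * θ) := by
    rw [← Complex.exp_conj]; simp
  by_cases h : Complex.exp (-(Complex.I * θ)) ≠ 1
  · rw [if_pos h]
    rw [map_div₀, map_sub (starRingEnd ℂ), RingHom.map_one, hconj, Complex.conj_ofReal]
    rw [← mul_div_assoc, ← neg_div]
    congr 1
    have : Complex.exp (Complex.I * θ) * (1 - Complex.exp (-(Complex.I * θ)))
        = Complex.exp (Complex.I * θ) - 1 := by
      rw [mul_sub, mul_one, hinv]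
    rw [this]; ring
  · rw [if_neg h]
    push_neg at h
    rw [h, mul_one] at hinv
    rw [hinv]
    simp [Complex.conj_I]

lemma keylem (r κ ex ey : ℂ) (t : ℝ)
    (hr : ex * r = -(starRingEnd ℂ) r) (hk : ey * κ = -(starRingEnd ℂ) κ) :
    -Complex.I * (r * (ex * t - t * ey) * κ) =
      ((2 * (r * t * (starRingEnd ℂ) κ).im : ℝ) : ℂ) := by
  have hcz : (starRingEnd ℂ) (r * (t : ℂ) * (starRingEnd ℂ) κ)
      = (starRingEnd ℂ) r * (t : ℂ) * κ := by
    simp [_root_.map_mul, Complex.conj_ofReal]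
  have h1 : r * (ex * t - t * ey) * κ
      = r * (t : ℂ) * (starRingEnd ℂ) κ
        - (starRingEnd ℂ) (r * (t : ℂ) * (starRingEnd ℂ) κ) := by
    rw [hcz]
    linear_combination ((t : ℂ) * κ) * hr - (r * (t : ℂ)) * hk
  rw [h1, Complex.sub_conj]
  push_cast
  set s := (r * (t : ℂ) * (starRingEnd ℂ) κ).im
  linear_combination (-2 * (s : ℂ)) * Complex.I_mul_I

/-- The matrix Â = -i R A K with A = S_F M - M S_f has all entries
real, and equals 2 Im(R M Kᴴ) entrywise. -/
theorem stmt_12 (m n : ℕ)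
    (x : Fin n → ℝ) (y : Fin m → ℝ)
    (SF : Matrix (Fin n) (Fin n) ℂ)
    (hSF : SF = Matrix.diagonal fun k => Complex.exp (Complex.I * (x k : ℝ)))
    (Sf : Matrix (Fin m) (Fin m) ℂ)
    (hSf : Sf = Matrix.diagonal fun j => Complex.exp (Complex.I * (y j : ℝ)))
    (K : Matrix (Fin m) (Fin m) ℂ)
    (hK : K = Matrix.diagonal fun j =>
      if Complex.exp (-(Complex.I * (y j : ℝ))) ≠ 1 then
        (1 - Complex.exp (-(Complex.I * (y j : ℝ))))
          / ((‖1 - Complex.exp (-(Complex.I * (y j : ℝ)))‖ : ℝ) : ℂ)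
      else Complex.I)
    (R : Matrix (Fin n) (Fin n) ℂ)
    (hR : R = Matrix.diagonal fun k =>
      if Complex.exp (-(Complex.I * (x k : ℝ))) ≠ 1 then
        (1 - Complex.exp (-(Complex.I * (x k : ℝ))))
          / ((‖1 - Complex.exp (-(Complex.I * (x k : ℝ)))‖ : ℝ) : ℂ)
      else Complex.I)
    (M : Matrix (Fin n) (Fin m) ℝ)
    (A : Matrix (Fin n) (Fin m) ℂ)
    (hA : A = SF * M.map (fun a => (a : ℂ)) - M.map (fun a => (a : ℂ)) * Sf)
    (Ahat : Matrix (Fin n) (Fin m) ℂ)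
    (hAhat : Ahat = (-Complex.I) • (R * A * K)) :
    (∀ k j, (Ahat k j).im = 0) ∧
    (∀ k j, Ahat k j =
      ((2 * ((R * M.map (fun a => (a : ℂ)) * Kᴴ) k j).im : ℝ) : ℂ)) := by
  subst hSF hSf hK hR hA hAhat
  have h2 : ∀ k j, ((-Complex.I) • ((Matrix.diagonal fun k =>
      if Complex.exp (-(Complex.I * (x k : ℝ))) ≠ 1 then
        (1 - Complex.exp (-(Complex.I * (x k : ℝ))))
          / ((‖1 - Complex.exp (-(Complex.I * (x k : ℝ)))‖ : ℝ) : ℂ)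
      else Complex.I) *
      ((Matrix.diagonal fun k => Complex.exp (Complex.I * (x k : ℝ))) * M.map (fun a => (a : ℂ))
        - M.map (fun a => (a : ℂ)) * Matrix.diagonal fun j => Complex.exp (Complex.I * (y j : ℝ))) *
      (Matrix.diagonal fun j =>
      if Complex.exp (-(Complex.I * (y j : ℝ))) ≠ 1 then
        (1 - Complex.exp (-(Complex.I * (y j : ℝ))))
          / ((‖1 - Complex.exp (-(Complex.I * (y j : ℝ)))‖ : ℝ) : ℂ)
      else Complex.I))) k j =
      ((2 * (((Matrix.diagonal fun k =>
      if Complex.exp (-(Complex.I * (x k : ℝ))) ≠ 1 then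
        (1 - Complex.exp (-(Complex.I * (x k : ℝ))))
          / ((‖1 - Complex.exp (-(Complex.I * (x k : ℝ)))‖ : ℝ) : ℂ)
      else Complex.I) * M.map (fun a => (a : ℂ)) *
      (Matrix.diagonal fun j =>
      if Complex.exp (-(Complex.I * (y j : ℝ))) ≠ 1 then
        (1 - Complex.exp (-(Complex.I * (y j : ℝ))))
          / ((‖1 - Complex.exp (-(Complex.I * (y j : ℝ)))‖ : ℝ) : ℂ)
      else Complex.I)ᴴ) k j).im : ℝ) : ℂ) := by
    intro k j
    rw [Matrix.diagonal_conjTranspose]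
    simp only [Matrix.smul_apply, Matrix.mul_diagonal, Matrix.diagonal_mul, Matrix.sub_apply,
      Matrix.map_apply, Pi.star_apply, smul_eq_mul]
    exact keylem _ _ _ _ (M k j) (rprop (x k)) (rprop (y j))
  exact ⟨fun k j => by rw [h2 k j]; simp, h2⟩
end

section
/- Let y_1, …, y_m be distinct real numbers and w_1, …, w_m ∈ ℂ satisfy e^{i y_j} w_j = conj(w_j) for all j. Define n(x) = Σ_{j=1}^m e^{i y_j} w_j/(x − y_j) and d(x) = Σ_{j=1}^m w_j/(x − y_j). Then for every real x not equal to any y_j one has n(x) = conj(d(x)), and consequently |n(x)/d(x)| = 1 for every real x ∉ {y_1, …, y_m} with d(x) ≠ 0. -/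
/-- If the coefficients satisfy e^{i y_j} w_j = conj(w_j), then the
barycentric numerator equals the conjugate of the denominator at every real
non-node point, and the barycentric rational function is unitary wherever defined. -/
theorem stmt_13 (m : ℕ)
    (y : Fin m → ℝ) (hy : Function.Injective y)
    (w : Fin m → ℂ)
    (hw : ∀ j, Complex.exp (Complex.I * (y j : ℝ)) * w j = starRingEnd ℂ (w j))
    (nf df : ℝ → ℂ)
    (hnf : ∀ t : ℝ, nf t = ∑ j, Complex.exp (Complex.I * (y j : ℝ)) * w j / ((t : ℂ) - ((y j : ℝ) : ℂ)))
    (hdf : ∀ t : ℝ, df t = ∑ j, w j / ((t : ℂ) - ((y j : ℝ) : ℂ))) :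
    (∀ t : ℝ, (∀ j, t ≠ y j) → nf t = starRingEnd ℂ (df t)) ∧
    (∀ t : ℝ, (∀ j, t ≠ y j) → df t ≠ 0 → ‖nf t / df t‖ = 1) := by
  have key : ∀ t : ℝ, nf t = starRingEnd ℂ (df t) := by
    intro t
    rw [hnf, hdf, map_sum]
    refine Finset.sum_congr rfl fun j _ => ?_
    rw [map_div₀, hw j]
    congr 1
    rw [map_sub]
    simp [Complex.conj_ofReal]
  refine ⟨fun t _ => key t, fun t _ hd => ?_⟩
  rw [norm_div, key t, Complex.norm_conj, div_self]
  exact norm_ne_zero_iff.mpr hd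
end

section
/- Let x_1, …, x_n be real numbers, S_F = diag(e^{i x_1}, …, e^{i x_n}) ∈ ℂ^{n×n}, and R ∈ ℂ^{n×n} the diagonal matrix with R_{kk} = (1 − e^{−i x_k})/|1 − e^{−i x_k}| if e^{−i x_k} ≠ 1 and R_{kk} = i otherwise. Then S_F R = −conj(R), and for every real matrix M ∈ ℝ^{n×m} one has R [M | −S_F M] = [R M | conj(R) M]; since R is unitary, the matrices [M | −S_F M] and [R M | conj(R) M] have the same singular values and the same right singular vectors. -/
open Matrix
open scoped Classical

lemma aux16_key (t : ℝ) :
    let z := Complex.exp (-(Complex.I * (t : ℝ)))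
    let r := if z ≠ 1 then (1 - z) / (‖1 - z‖ : ℂ) else Complex.I
    Complex.exp (Complex.I * (t : ℝ)) * r = -(starRingEnd ℂ) r ∧
      (starRingEnd ℂ) r * r = 1 := by
  intro z r
  have hw : Complex.exp (Complex.I * (t : ℝ)) * z = 1 := by
    rw [← Complex.exp_add]; simp
  have hstarz : (starRingEnd ℂ) z = Complex.exp (Complex.I * (t : ℝ)) := by
    rw [← Complex.exp_conj]; congr 1
    simp [Complex.conj_I]
  by_cases hz : z = 1
  · have hw1 : Complex.exp (Complex.I * (t : ℝ)) = 1 := by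
      rw [← hstarz, hz]; simp
    simp only [r, hz, ne_eq, not_true_eq_false, if_false, hw1, one_mul]
    constructor
    · simp [Complex.conj_I]
    · simp [Complex.conj_I]
  · have hz' : (1 : ℂ) - z ≠ 0 := sub_ne_zero.mpr (Ne.symm hz)
    have habs : (‖1 - z‖ : ℂ) ≠ 0 := by
      exact_mod_cast (norm_ne_zero_iff.mpr hz')
    simp only [r, ne_eq, hz, not_false_eq_true, if_true]
    constructor
    · rw [map_div₀]
      have h1 : (starRingEnd ℂ) ((‖1 - z‖ : ℂ)) = (‖1 - z‖ : ℂ) :=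
        Complex.conj_ofReal _
      have hc : (starRingEnd ℂ) (1 - z) = 1 - Complex.exp (Complex.I * (t : ℝ)) := by
        simp [map_sub, hstarz]
      rw [h1, hc]
      field_simp
      linear_combination -hw
    · rw [map_div₀]
      have h1 : (starRingEnd ℂ) ((‖1 - z‖ : ℂ)) = (‖1 - z‖ : ℂ) :=
        Complex.conj_ofReal _
      rw [h1, div_mul_div_comm, ← Complex.normSq_eq_conj_mul_self,
        ← Complex.ofReal_mul, ← Complex.sq_norm]
      rw [div_eq_one_iff_eq]
      · push_cast; ring
      · exact_mod_cast mul_ne_zero ((norm_ne_zero_iff.mpr hz')) ((norm_ne_zero_iff.mpr hz'))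

/-- S_F R = -conj(R); multiplying [M | -S_F M] by the unitary
diagonal matrix R gives [R M | conj(R) M], so both matrices have the same
Gram matrix, hence the same singular values and right singular vectors. -/
theorem stmt_16 (m n : ℕ)
    (x : Fin n → ℝ)
    (SF : Matrix (Fin n) (Fin n) ℂ)
    (hSF : SF = Matrix.diagonal fun k => Complex.exp (Complex.I * (x k : ℝ)))
    (R : Matrix (Fin n) (Fin n) ℂ)
    (hR : R = Matrix.diagonal fun k =>
      if Complex.exp (-(Complex.I * (x k : ℝ))) ≠ 1 then
        (1 - Complex.exp (-(Complex.I * (x k : ℝ))))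
          / (‖1 - Complex.exp (-(Complex.I * (x k : ℝ)))‖ : ℂ)
      else Complex.I)
    (M : Matrix (Fin n) (Fin m) ℝ)
    (B1 B2 : Matrix (Fin n) (Fin m ⊕ Fin m) ℂ)
    (hB1l : ∀ k j, B1 k (Sum.inl j) = ((M k j : ℝ) : ℂ))
    (hB1r : ∀ k j, B1 k (Sum.inr j) = -Complex.exp (Complex.I * (x k : ℝ)) * ((M k j : ℝ) : ℂ))
    (hB2l : ∀ k j, B2 k (Sum.inl j) = (R * M.map (fun a => (a : ℂ))) k j)
    (hB2r : ∀ k j, B2 k (Sum.inr j) = ((R.map (starRingEnd ℂ)) * M.map (fun a => (a : ℂ))) k j) :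
    SF * R = -(R.map (starRingEnd ℂ)) ∧
    Rᴴ * R = 1 ∧
    R * B1 = B2 ∧
    B1ᴴ * B1 = B2ᴴ * B2 := by
  set d : Fin n → ℂ := fun k =>
      if Complex.exp (-(Complex.I * (x k : ℝ))) ≠ 1 then
        (1 - Complex.exp (-(Complex.I * (x k : ℝ))))
          / (‖1 - Complex.exp (-(Complex.I * (x k : ℝ)))‖ : ℂ)
      else Complex.I with hd
  have hkey : ∀ k, Complex.exp (Complex.I * (x k : ℝ)) * d k = -(starRingEnd ℂ) (d k) ∧
      (starRingEnd ℂ) (d k) * d k = 1 := fun k => aux16_key (x k)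
  have hRmap : R.map (starRingEnd ℂ) = Matrix.diagonal fun k => (starRingEnd ℂ) (d k) := by
    rw [hR, Matrix.diagonal_map (map_zero _)]
  have h1 : SF * R = -(R.map (starRingEnd ℂ)) := by
    rw [hRmap, hSF, hR, Matrix.diagonal_mul_diagonal, Matrix.diagonal_neg]
    exact congrArg Matrix.diagonal (funext fun k => (hkey k).1)
  have h2 : Rᴴ * R = 1 := by
    rw [hR, Matrix.diagonal_conjTranspose, Matrix.diagonal_mul_diagonal]
    have : (star d) * d = 1 := by
      funext k; exact (hkey k).2
    rw [show ∀ f : Fin n → ℂ, Matrix.diagonal f = Matrix.diagonal f from fun _ => rfl]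
    simp only [Pi.mul_def, Pi.star_apply] at this ⊢
    rw [show (fun k => star (d k) * d k) = fun _ => (1:ℂ) from funext fun k => (hkey k).2]
    exact Matrix.diagonal_one
  have h3 : R * B1 = B2 := by
    ext k j
    have hRd : R = Matrix.diagonal d := hR
    rw [hRd, Matrix.diagonal_mul]
    rcases j with j | j
    · rw [hB2l k j, hRd, hB1l, Matrix.diagonal_mul, Matrix.map_apply]
    · rw [hB2r k j, hRmap, hB1r, Matrix.diagonal_mul, Matrix.map_apply]
      have := (hkey k).1
      ring_nf
      rw [mul_comm (d k) _, this]
      ring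
  have h4 : B1ᴴ * B1 = B2ᴴ * B2 := by
    rw [← h3, Matrix.conjTranspose_mul, Matrix.mul_assoc, ← Matrix.mul_assoc Rᴴ, h2,
      Matrix.one_mul]
  exact ⟨h1, h2, h3, h4⟩
end

section
/- Let y_1, …, y_m be distinct real support nodes, x_1, …, x_n distinct real test nodes disjoint from the support nodes, L ∈ ℂ^{n×m} the Loewner matrix with entries L_{kj} = (e^{i x_k} − e^{i y_j})/(x_k − y_j), and K ∈ ℂ^{m×m}, R ∈ ℂ^{n×n} the diagonal phase matrices with K_{jj} = (1 − e^{−i y_j})/|1 − e^{−i y_j}| if e^{−i y_j} ≠ 1, K_{jj} = i otherwise, and R_{kk} = (1 − e^{−i x_k})/|1 − e^{−i x_k}| if e^{−i x_k} ≠ 1, R_{kk} = i otherwise. Let L̂ = −i R L K (a real n×m matrix), and suppose L̂ V̂ = Û S is a real singular value decomposition with V̂ᵀV̂ = I, ÛᵀÛ = I, and S = diag(σ_1, …, σ_m) with σ_1 ≥ … ≥ σ_m ≥ 0. Then w̃ = i K V̂ e_m is a unit vector in ℂ^m with ‖L w̃‖_2 = σ_m, and ‖L u‖_2 ≥ σ_m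 for every unit vector u ∈ ℂ^m; i.e., w̃ minimizes the linearized error ‖L u‖_2 over unit vectors. -/
open Matrix
open scoped Classical

lemma aux_col_orth {n m : ℕ} (U : Matrix (Fin n) (Fin m) ℝ)
    (hU : Uᵀ * U = 1) (d : Fin m → ℝ) :
    ∑ k, (U.mulVec d k) ^ 2 = ∑ j, d j ^ 2 := by
  have h2 : (U.mulVec d) ⬝ᵥ (U.mulVec d) = ((Uᵀ * U).mulVec d) ⬝ᵥ d := by
    rw [Matrix.dotProduct_mulVec]
    congr 1
    rw [← Matrix.mulVec_mulVec, Matrix.mulVec_transpose]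
  simp only [hU, Matrix.one_mulVec] at h2
  simpa [dotProduct, sq] using h2

lemma aux_real_bound {n m : ℕ} (Lhat : Matrix (Fin n) (Fin m) ℝ)
    (Vhat : Matrix (Fin m) (Fin m) ℝ) (Uhat : Matrix (Fin n) (Fin m) ℝ)
    (σ : Fin m → ℝ)
    (hsvd : Lhat * Vhat = Uhat * Matrix.diagonal σ)
    (hV : Vhatᵀ * Vhat = 1) (hU : Uhatᵀ * Uhat = 1)
    (s : ℝ) (hs : ∀ j, s ≤ σ j) (hs0 : 0 ≤ s)
    (w : Fin m → ℝ) :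
    s ^ 2 * ∑ j, w j ^ 2 ≤ ∑ k, (Lhat.mulVec w k) ^ 2 := by
  have hVV : Vhat * Vhatᵀ = 1 := mul_eq_one_comm.mp hV
  set a : Fin m → ℝ := Vhatᵀ.mulVec w with ha
  have hw : Vhat.mulVec a = w := by
    rw [ha, Matrix.mulVec_mulVec, hVV, Matrix.one_mulVec]
  have hLw : Lhat.mulVec w = Uhat.mulVec (fun j => σ j * a j) := by
    have hd : Matrix.diagonal σ *ᵥ a = fun j => σ j * a j := by
      ext j; rw [Matrix.mulVec_diagonal]
    rw [← hw, Matrix.mulVec_mulVec, hsvd, ← Matrix.mulVec_mulVec, hd]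
  have h1 : ∑ k, (Lhat.mulVec w k) ^ 2 = ∑ j, (σ j * a j) ^ 2 := by
    rw [hLw]; exact aux_col_orth Uhat hU _
  have h2 : ∑ j, a j ^ 2 = ∑ j, w j ^ 2 := by
    have := aux_col_orth Vhatᵀ (by rwa [Matrix.transpose_transpose]) w
    rwa [ha]
  rw [h1, ← h2, Finset.mul_sum]
  apply Finset.sum_le_sum
  intro j _
  rw [mul_pow]
  apply mul_le_mul_of_nonneg_right _ (sq_nonneg _)
  exact pow_le_pow_left₀ hs0 (hs j) 2

lemma aux_complex_split {n m : ℕ} (Lhat : Matrix (Fin n) (Fin m) ℝ) (c : Fin m → ℂ) (k : Fin n) :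
    ‖∑ j, (Lhat k j : ℂ) * c j‖ ^ 2 =
      (Lhat.mulVec (fun j => (c j).re) k) ^ 2 +
      (Lhat.mulVec (fun j => (c j).im) k) ^ 2 := by
  rw [Complex.sq_norm, Complex.normSq_apply]
  have hre : (∑ j, (Lhat k j : ℂ) * c j).re = Lhat.mulVec (fun j => (c j).re) k := by
    simp [Matrix.mulVec, dotProduct, Complex.re_sum, Complex.mul_re]
  have him : (∑ j, (Lhat k j : ℂ) * c j).im = Lhat.mulVec (fun j => (c j).im) k := by
    simp [Matrix.mulVec, dotProduct, Complex.im_sum, Complex.mul_im]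
  rw [hre, him, sq, sq]

/-- From a real SVD of the re-scaled Loewner matrix L̂ = -i R L K,
the vector w̃ = i K V̂ e_m is a unit vector with ‖L w̃‖₂ = σ_m, and it minimizes
the linearized error ‖L u‖₂ over all unit vectors u. -/
theorem stmt_17 (m n : ℕ) (hm : 0 < m)
    (y : Fin m → ℝ) (hy : Function.Injective y)
    (x : Fin n → ℝ) (hx : Function.Injective x)
    (hxy : ∀ k j, x k ≠ y j)
    (L : Matrix (Fin n) (Fin m) ℂ)
    (hL : ∀ k j, L k j = (Complex.exp (Complex.I * (x k : ℝ)) - Complex.exp (Complex.I * (y j : ℝ)))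
        / (((x k : ℝ) : ℂ) - ((y j : ℝ) : ℂ)))
    (K : Matrix (Fin m) (Fin m) ℂ)
    (hK : K = Matrix.diagonal fun j =>
      if Complex.exp (-(Complex.I * (y j : ℝ))) ≠ 1 then
        (1 - Complex.exp (-(Complex.I * (y j : ℝ))))
          / (‖1 - Complex.exp (-(Complex.I * (y j : ℝ)))‖ : ℂ)
      else Complex.I)
    (R : Matrix (Fin n) (Fin n) ℂ)
    (hR : R = Matrix.diagonal fun k =>
      if Complex.exp (-(Complex.I * (x k : ℝ))) ≠ 1 then
        (1 - Complex.exp (-(Complex.I * (x k : ℝ))))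
          / (‖1 - Complex.exp (-(Complex.I * (x k : ℝ)))‖ : ℂ)
      else Complex.I)
    -- L̂ = -i R L K is a real matrix:
    (Lhat : Matrix (Fin n) (Fin m) ℝ)
    (hLhat : Lhat.map (fun a => (a : ℂ)) = (-Complex.I) • (R * L * K))
    -- real singular value decomposition of L̂ with decreasing nonnegative singular values:
    (Vhat : Matrix (Fin m) (Fin m) ℝ) (Uhat : Matrix (Fin n) (Fin m) ℝ)
    (σ : Fin m → ℝ)
    (hsvd : Lhat * Vhat = Uhat * Matrix.diagonal σ)
    (hV : Vhatᵀ * Vhat = 1) (hU : Uhatᵀ * Uhat = 1)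
    (hσdec : ∀ i j : Fin m, i ≤ j → σ j ≤ σ i) (hσ0 : ∀ i, 0 ≤ σ i)
    -- w̃ = i K V̂ e_m, where e_m is the last standard basis vector:
    (wtilde : Fin m → ℂ)
    (hwtilde : wtilde = Complex.I •
      K.mulVec fun j => ((Vhat j (⟨m - 1, by omega⟩ : Fin m) : ℝ) : ℂ)) :
    (∑ j, ‖wtilde j‖ ^ 2 = 1) ∧
    Real.sqrt (∑ k, ‖L.mulVec wtilde k‖ ^ 2) = σ (⟨m - 1, by omega⟩ : Fin m) ∧
    (∀ u : Fin m → ℂ, (∑ j, ‖u j‖ ^ 2 = 1) →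
      σ (⟨m - 1, by omega⟩ : Fin m) ≤ Real.sqrt (∑ k, ‖L.mulVec u k‖ ^ 2)) := by
  set e : Fin m := (⟨m - 1, by omega⟩ : Fin m) with he
  -- diagonal entries have modulus 1
  have habsK : ∀ j, ‖K j j‖ = 1 := by
    intro j
    rw [hK, Matrix.diagonal_apply_eq]
    by_cases h : Complex.exp (-(Complex.I * (y j : ℝ))) ≠ 1
    · rw [if_pos h]
      have hne : (1 : ℂ) - Complex.exp (-(Complex.I * (y j : ℝ))) ≠ 0 :=
        sub_ne_zero.mpr (Ne.symm h)
      rw [norm_div, Complex.norm_real,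
        norm_norm,
        div_self (norm_ne_zero_iff.mpr hne)]
    · rw [if_neg h]; exact Complex.norm_I
  have habsR : ∀ k, ‖R k k‖ = 1 := by
    intro k
    rw [hR, Matrix.diagonal_apply_eq]
    by_cases h : Complex.exp (-(Complex.I * (x k : ℝ))) ≠ 1
    · rw [if_pos h]
      have hne : (1 : ℂ) - Complex.exp (-(Complex.I * (x k : ℝ))) ≠ 0 :=
        sub_ne_zero.mpr (Ne.symm h)
      rw [norm_div, Complex.norm_real,
        norm_norm,
        div_self (norm_ne_zero_iff.mpr hne)]
    · rw [if_neg h]; exact Complex.norm_I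
  have hKconj : ∀ j, (starRingEnd ℂ) (K j j) * K j j = 1 := by
    intro j
    rw [mul_comm, Complex.mul_conj, ← Complex.sq_norm, habsK]
    norm_num
  have hRconj : ∀ k, (starRingEnd ℂ) (R k k) * R k k = 1 := by
    intro k
    rw [mul_comm, Complex.mul_conj, ← Complex.sq_norm, habsR]
    norm_num
  -- entrywise relation between Lhat and L
  have hRL : ∀ k j, (Lhat k j : ℂ) = -Complex.I * (R k k * L k j * K j j) := by
    intro k j
    have h := congrFun (congrFun hLhat k) j
    rw [Matrix.map_apply, Matrix.smul_apply, smul_eq_mul] at h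
    rw [h]
    simp only [hR, hK, Matrix.mul_diagonal, Matrix.diagonal_mul, Matrix.diagonal_apply_eq]
  -- key formula for L.mulVec
  have key : ∀ (u : Fin m → ℂ) (k : Fin n),
      L.mulVec u k = Complex.I * (starRingEnd ℂ) (R k k) *
        ∑ j, (Lhat k j : ℂ) * ((starRingEnd ℂ) (K j j) * u j) := by
    intro u k
    rw [Matrix.mulVec, dotProduct, Finset.mul_sum]
    apply Finset.sum_congr rfl
    intro j _
    rw [hRL k j]
    have hII : Complex.I * -Complex.I = 1 := by
      rw [mul_neg, Complex.I_mul_I, neg_neg]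
    have expand : Complex.I * (starRingEnd ℂ) (R k k) *
        (-Complex.I * (R k k * L k j * K j j) * ((starRingEnd ℂ) (K j j) * u j)) =
        (Complex.I * -Complex.I) * ((starRingEnd ℂ) (R k k) * R k k) *
          ((starRingEnd ℂ) (K j j) * K j j) * (L k j * u j) := by ring
    rw [expand, hII, hRconj k, hKconj j, one_mul, one_mul, one_mul]
  -- abs of L.mulVec
  have habs : ∀ (u : Fin m → ℂ) (k : Fin n),
      ‖L.mulVec u k‖ =
        ‖∑ j, (Lhat k j : ℂ) * ((starRingEnd ℂ) (K j j) * u j)‖ := by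
    intro u k
    rw [key u k, norm_mul, norm_mul, Complex.norm_I, Complex.norm_conj, habsR, one_mul, one_mul]
  -- sum of squares formula for any u
  have hsum : ∀ (u : Fin m → ℂ),
      ∑ k, ‖L.mulVec u k‖ ^ 2 =
        (∑ k, (Lhat.mulVec (fun j => ((starRingEnd ℂ) (K j j) * u j).re) k) ^ 2) +
        (∑ k, (Lhat.mulVec (fun j => ((starRingEnd ℂ) (K j j) * u j).im) k) ^ 2) := by
    intro u
    rw [← Finset.sum_add_distrib]
    apply Finset.sum_congr rfl
    intro k _
    rw [habs u k, aux_complex_split Lhat (fun j => (starRingEnd ℂ) (K j j) * u j) k]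
  -- abs preserved by multiplication with conj K
  have hcabs : ∀ (u : Fin m → ℂ) (j : Fin m),
      ((starRingEnd ℂ) (K j j) * u j).re ^ 2 + ((starRingEnd ℂ) (K j j) * u j).im ^ 2 =
        ‖u j‖ ^ 2 := by
    intro u j
    have : ‖(starRingEnd ℂ) (K j j) * u j‖ = ‖u j‖ := by
      rw [norm_mul, Complex.norm_conj, habsK, one_mul]
    calc ((starRingEnd ℂ) (K j j) * u j).re ^ 2 + ((starRingEnd ℂ) (K j j) * u j).im ^ 2
        = ‖(starRingEnd ℂ) (K j j) * u j‖ ^ 2 := by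
          rw [Complex.sq_norm, Complex.normSq_apply, sq, sq]
      _ = ‖u j‖ ^ 2 := by rw [this]
  -- smallest singular value
  have hsmin : ∀ j, σ e ≤ σ j := by
    intro j
    apply hσdec j e
    rw [Fin.le_def]
    have := j.isLt
    simp only [he]
    omega
  -- the wtilde vector entries
  have hwt : ∀ j, wtilde j = Complex.I * (K j j * (Vhat j e : ℂ)) := by
    intro j
    conv_lhs => rw [hwtilde]
    simp only [Pi.smul_apply, smul_eq_mul]
    congr 1
    conv_lhs => rw [hK, Matrix.mulVec_diagonal]
    rw [hK, Matrix.diagonal_apply_eq]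
  -- the e-th column of Vhat
  have hVcol : (fun j => Vhat j e) = Vhat.mulVec (Pi.single e 1) := by
    ext j
    simp [Matrix.mulVec, dotProduct, Pi.single_apply]
  have hVe : ∑ j, (Vhat j e) ^ 2 = 1 := by
    have h1 : ∑ j, (Vhat j e) ^ 2 = ∑ j, (Vhat.mulVec (Pi.single e 1) j) ^ 2 := by
      apply Finset.sum_congr rfl
      intro j _
      rw [show Vhat j e = Vhat.mulVec (Pi.single e 1) j from congrFun hVcol j]
    rw [h1, aux_col_orth Vhat hV]
    simp [Pi.single_apply]
  -- claim 1: unit norm of wtilde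
  have claim1 : ∑ j, ‖wtilde j‖ ^ 2 = 1 := by
    have : ∀ j, ‖wtilde j‖ ^ 2 = (Vhat j e) ^ 2 := by
      intro j
      rw [hwt, norm_mul, norm_mul, Complex.norm_I, habsK, Complex.norm_real, one_mul, one_mul,
        Real.norm_eq_abs, sq_abs]
    rw [Finset.sum_congr rfl fun j _ => this j, hVe]
  -- the conjugated vector for wtilde
  have hc : ∀ j, (starRingEnd ℂ) (K j j) * wtilde j = Complex.I * ((Vhat j e : ℝ) : ℂ) := by
    intro j
    rw [hwt]
    calc (starRingEnd ℂ) (K j j) * (Complex.I * (K j j * ((Vhat j e : ℝ) : ℂ)))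
        = Complex.I * (((starRingEnd ℂ) (K j j) * K j j) * ((Vhat j e : ℝ) : ℂ)) := by ring
      _ = Complex.I * ((Vhat j e : ℝ) : ℂ) := by rw [hKconj j, one_mul]
  have hre0 : (fun j => ((starRingEnd ℂ) (K j j) * wtilde j).re) = (0 : Fin m → ℝ) := by
    ext j; rw [hc]; simp
  have him1 : (fun j => ((starRingEnd ℂ) (K j j) * wtilde j).im) = fun j => Vhat j e := by
    ext j; rw [hc]; simp
  -- claim 2
  have hcol2 : Lhat.mulVec (fun j => Vhat j e) = Uhat.mulVec (Pi.single e (σ e)) := by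
    have hd : Matrix.diagonal σ *ᵥ Pi.single e 1 = Pi.single e (σ e) := by
      ext j
      rw [Matrix.mulVec_diagonal]
      by_cases hje : j = e <;> simp [Pi.single_apply, hje]
    rw [hVcol, Matrix.mulVec_mulVec, hsvd, ← Matrix.mulVec_mulVec, hd]
  have hsum2 : ∑ k, (Lhat.mulVec (fun j => Vhat j e) k) ^ 2 = σ e ^ 2 := by
    rw [hcol2, aux_col_orth Uhat hU]
    simp [Pi.single_apply]
  have claim2 : Real.sqrt (∑ k, ‖L.mulVec wtilde k‖ ^ 2) = σ e := by
    rw [hsum wtilde, hre0, him1, Matrix.mulVec_zero]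
    simp only [Pi.zero_apply]
    rw [hsum2]
    simp [Real.sqrt_sq (hσ0 e)]
  -- claim 3
  refine ⟨claim1, claim2, ?_⟩
  intro u hu
  have ha := aux_real_bound Lhat Vhat Uhat σ hsvd hV hU (σ e) hsmin (hσ0 e)
    (fun j => ((starRingEnd ℂ) (K j j) * u j).re)
  have hb := aux_real_bound Lhat Vhat Uhat σ hsvd hV hU (σ e) hsmin (hσ0 e)
    (fun j => ((starRingEnd ℂ) (K j j) * u j).im)
  have hnorm : (∑ j, ((starRingEnd ℂ) (K j j) * u j).re ^ 2) +
      (∑ j, ((starRingEnd ℂ) (K j j) * u j).im ^ 2) = 1 := by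
    rw [← Finset.sum_add_distrib]
    rw [Finset.sum_congr rfl fun j _ => hcabs u j]
    exact hu
  have hlow : σ e ^ 2 ≤ ∑ k, ‖L.mulVec u k‖ ^ 2 := by
    rw [hsum u]
    calc σ e ^ 2 = σ e ^ 2 * ((∑ j, ((starRingEnd ℂ) (K j j) * u j).re ^ 2) +
          (∑ j, ((starRingEnd ℂ) (K j j) * u j).im ^ 2)) := by rw [hnorm, mul_one]
      _ = σ e ^ 2 * (∑ j, ((starRingEnd ℂ) (K j j) * u j).re ^ 2) +
          σ e ^ 2 * (∑ j, ((starRingEnd ℂ) (K j j) * u j).im ^ 2) := by ring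
      _ ≤ _ := add_le_add ha hb
  calc σ e = Real.sqrt (σ e ^ 2) := (Real.sqrt_sq (hσ0 e)).symm
    _ ≤ Real.sqrt (∑ k, ‖L.mulVec u k‖ ^ 2) := Real.sqrt_le_sqrt hlow
end
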